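/- arXiv:1105.5313 — 7 statements merged into one kernel-verified Lean document; each statement's English description precedes it below -/
import Mathlib

section
/- The submonoid of the power set monoid P(S_n) generated by the sets {id, s_i} for i = 1,...,n-1 (where s_i are the simple transpositions) is isomorphic to the 0-Hecke monoid H_n; explicitly, the map sending the generator e_i of H_n to {id, s_i} extends to a monoid isomorphism. -/
open Pointwise

/-- The simple transposition `(i, i+1)` in the symmetric group on `Fin n`. -/
def simpleT {n : ℕ} (i : Fin (n - 1)) : Equiv.Perm (Fin n) :=
  Equiv.swap ⟨i.1, by have := i.2; omega⟩ ⟨i.1 + 1, by have := i.2; omega⟩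

/-- Defining relations of the 0-Hecke monoid. -/
def heckeRels (n : ℕ) : Set (FreeMonoid (Fin (n - 1)) × FreeMonoid (Fin (n - 1))) :=
  {p | (∃ i, p = (FreeMonoid.of i * FreeMonoid.of i, FreeMonoid.of i)) ∨
       (∃ i j, i.1 + 2 ≤ j.1 ∧
          p = (FreeMonoid.of i * FreeMonoid.of j, FreeMonoid.of j * FreeMonoid.of i)) ∨
       (∃ i j, j.1 = i.1 + 1 ∧
          p = (FreeMonoid.of i * FreeMonoid.of j * FreeMonoid.of i,
               FreeMonoid.of j * FreeMonoid.of i * FreeMonoid.of j))}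

/-- The congruence on the free monoid generated by the 0-Hecke relations. -/
def heckeCon (n : ℕ) : Con (FreeMonoid (Fin (n - 1))) :=
  conGen (fun a b => (a, b) ∈ heckeRels n)

/-- The 0-Hecke monoid `H_n`. -/
abbrev Hecke (n : ℕ) := (heckeCon n).Quotient

/-- The generator `e_i` of the 0-Hecke monoid. -/
def heckeGen (n : ℕ) (i : Fin (n - 1)) : Hecke n := (heckeCon n).mk' (FreeMonoid.of i)

/-- Binary relations on `Fin n` (equivalently, `n × n` Boolean matrices),
with `ξ i j` meaning the `(i,j)` entry is `1`. -/
abbrev BRel (n : ℕ) := Fin n → Fin n → Prop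

/-- The monoid of binary relations / Boolean matrices, under relational
composition (= Boolean matrix multiplication). -/
instance BRel.instMonoid (n : ℕ) : Monoid (BRel n) where
  mul r s := fun i j => ∃ k, r i k ∧ s k j
  one := fun i j => i = j
  mul_assoc r s t := by
    funext i j
    show (∃ k, (∃ m, r i m ∧ s m k) ∧ t k j) = (∃ m, r i m ∧ ∃ k, s m k ∧ t k j)
    apply propext; tauto
  one_mul r := by
    funext i j
    show (∃ k, i = k ∧ r k j) = r i j
    apply propext
    constructor
    · rintro ⟨k, rfl, h⟩; exact h
    · intro h; exact ⟨i, rfl, h⟩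
  mul_one r := by
    funext i j
    show (∃ k, r i k ∧ k = j) = r i j
    apply propext
    constructor
    · rintro ⟨k, h, rfl⟩; exact h
    · intro h; exact ⟨j, h, rfl⟩

theorem BRel.mul_def {n : ℕ} (r s : BRel n) (i j : Fin n) :
    (r * s) i j ↔ ∃ k, r i k ∧ s k j := Iff.rfl

theorem BRel.one_def {n : ℕ} (i j : Fin n) : (1 : BRel n) i j ↔ i = j := Iff.rfl

/-- The generator `ε_i = Φ(id) + Φ(s_i)` of the double Catalan monoid:
the identity matrix plus extra `1` entries at `(i, i+1)` and `(i+1, i)`. -/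
def eps {n : ℕ} (i : Fin (n - 1)) : BRel n := fun a b => a = b ∨ a = simpleT i b

/-- The double Catalan monoid `DC_n`, the submonoid of Boolean matrices
generated by the `ε_i`. -/
def DC (n : ℕ) : Submonoid (BRel n) := Submonoid.closure (Set.range (eps (n := n)))

open Classical in
/-- `max(ξ)(j)` : the largest row index `i` with `ξ i j` (for a reflexive
relation; the diagonal element `j` is thrown in to guarantee nonemptiness). -/
noncomputable def maxF {n : ℕ} (ξ : BRel n) (j : Fin n) : Fin n :=
  (insert j (Finset.univ.filter fun i => ξ i j)).max' (Finset.insert_nonempty _ _)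

open Classical in
/-- `min(ξ)(j)` : the smallest row index `i` with `ξ i j`. -/
noncomputable def minF {n : ℕ} (ξ : BRel n) (j : Fin n) : Fin n :=
  (insert j (Finset.univ.filter fun i => ξ i j)).min' (Finset.insert_nonempty _ _)

/-- A set of `Fin n` is an interval of consecutive integers. -/
def IsIntervalSet {n : ℕ} (S : Set (Fin n)) : Prop :=
  ∀ ⦃a b c : Fin n⦄, a ≤ b → b ≤ c → a ∈ S → c ∈ S → b ∈ S

/-- A binary relation is convex if it is reflexive and all its rows and
columns are intervals. -/
def IsConvexRel {n : ℕ} (ξ : BRel n) : Prop :=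
  (∀ i, ξ i i) ∧ (∀ j, IsIntervalSet {i | ξ i j}) ∧ (∀ j, IsIntervalSet {i | ξ j i})

/-- The left-to-right maximum function `α_w`. -/
def lrMax {n : ℕ} (w : Equiv.Perm (Fin n)) (j : Fin n) : Fin n :=
  (Finset.Iic j).sup' ⟨j, Finset.mem_Iic.2 le_rfl⟩ (fun k => w k)

/-- The right-to-left minimum function `β_w`. -/
def rlMin {n : ℕ} (w : Equiv.Perm (Fin n)) (j : Fin n) : Fin n :=
  (Finset.Ici j).inf' ⟨j, Finset.mem_Ici.2 le_rfl⟩ (fun k => w k)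

/-- The Boolean matrix `Ψ(z_w)`, the image of `w` in the double Catalan
monoid: the `(i,j)` entry is `1` iff `β_w(j) ≤ i ≤ α_w(j)`. -/
def psiMat {n : ℕ} (w : Equiv.Perm (Fin n)) : BRel n :=
  fun i j => rlMin w j ≤ i ∧ i ≤ lrMax w j

/-- `l` is a reduced word for the permutation `w`. -/
def IsRedWord {n : ℕ} (w : Equiv.Perm (Fin n)) (l : List (Fin (n - 1))) : Prop :=
  (l.map simpleT).prod = w ∧
    ∀ l' : List (Fin (n - 1)), (l'.map simpleT).prod = w → l.length ≤ l'.length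

/-- The Bruhat order on the symmetric group, via the subword property. -/
def bruhatLE {n : ℕ} (u w : Equiv.Perm (Fin n)) : Prop :=
  ∃ lw, IsRedWord w lw ∧ ∃ lu, lu.Sublist lw ∧ IsRedWord u lu

/-- `w` is 321-avoiding. -/
def Avoids321 {n : ℕ} (w : Equiv.Perm (Fin n)) : Prop :=
  ¬ ∃ i j k : Fin n, i < j ∧ j < k ∧ w k < w j ∧ w j < w i

/-- `w` is 312-avoiding. -/
def Avoids312 {n : ℕ} (w : Equiv.Perm (Fin n)) : Prop :=
  ¬ ∃ i j k : Fin n, i < j ∧ j < k ∧ w j < w k ∧ w k < w i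

/-- `w` is 4321-avoiding. -/
def Avoids4321 {n : ℕ} (w : Equiv.Perm (Fin n)) : Prop :=
  ¬ ∃ i j k l : Fin n, i < j ∧ j < k ∧ k < l ∧ w l < w k ∧ w k < w j ∧ w j < w i

/-- The monoid `C_n^+` of order-preserving non-decreasing transformations. -/
def Cplus (n : ℕ) : Submonoid (Function.End (Fin n)) where
  carrier := {f | Monotone f ∧ ∀ i, i ≤ f i}
  one_mem' := ⟨monotone_id, fun _ => le_rfl⟩
  mul_mem' := by
    rintro f g ⟨hf1, hf2⟩ ⟨hg1, hg2⟩
    exact ⟨hf1.comp hg1, fun i => (hg2 i).trans (hf2 (g i))⟩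

/-- The monoid `C_n^-` of order-preserving non-increasing transformations. -/
def Cminus (n : ℕ) : Submonoid (Function.End (Fin n)) where
  carrier := {f | Monotone f ∧ ∀ i, f i ≤ i}
  one_mem' := ⟨monotone_id, fun _ => le_rfl⟩
  mul_mem' := by
    rintro f g ⟨hf1, hf2⟩ ⟨hg1, hg2⟩
    exact ⟨hf1.comp hg1, fun i => (hf2 (g i)).trans (hg2 i)⟩

namespace Stmt0Aux

variable {n : ℕ}

local notation "P" => Equiv.Perm (Fin n)

def aF (i : Fin (n - 1)) : Fin n := ⟨i.1, by have := i.2; omega⟩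
def bF (i : Fin (n - 1)) : Fin n := ⟨i.1 + 1, by have := i.2; omega⟩

lemma aF_val (i : Fin (n - 1)) : (aF i).1 = i.1 := rfl
lemma bF_val (i : Fin (n - 1)) : (bF i).1 = i.1 + 1 := rfl

lemma simpleT_eq (i : Fin (n - 1)) : simpleT i = Equiv.swap (aF i) (bF i) := rfl

lemma aF_lt_bF (i : Fin (n - 1)) : aF i < bF i := by simp [aF, bF, Fin.lt_def]

lemma sT_aF (i : Fin (n - 1)) : simpleT i (aF i) = bF i := Equiv.swap_apply_left _ _
lemma sT_bF (i : Fin (n - 1)) : simpleT i (bF i) = aF i := Equiv.swap_apply_right _ _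

lemma sT_fix {i : Fin (n - 1)} {x : Fin n} (h1 : x.1 ≠ i.1) (h2 : x.1 ≠ i.1 + 1) :
    simpleT i x = x :=
  Equiv.swap_apply_of_ne_of_ne (fun h => h1 (congrArg Fin.val h))
    (fun h => h2 (congrArg Fin.val h))

lemma sT_mul_self (i : Fin (n - 1)) : simpleT i * simpleT i = 1 := Equiv.swap_mul_self _ _

lemma sT_inv (i : Fin (n - 1)) : (simpleT i)⁻¹ = simpleT i := Equiv.swap_inv _ _

lemma conj_sT (i j : Fin (n - 1)) : simpleT i * simpleT j * simpleT i
    = Equiv.swap (simpleT i (aF j)) (simpleT i (bF j)) := by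
  rw [Equiv.swap_apply_apply, sT_inv, ← simpleT_eq j]

lemma sT_comm {i j : Fin (n - 1)} (h : i.1 + 2 ≤ j.1) :
    simpleT i * simpleT j = simpleT j * simpleT i := by
  have e1 : simpleT i (aF j) = aF j := sT_fix (by rw [aF_val]; omega) (by rw [aF_val]; omega)
  have e2 : simpleT i (bF j) = bF j := sT_fix (by rw [bF_val]; omega) (by rw [bF_val]; omega)
  have h2 : simpleT i * simpleT j * simpleT i = simpleT j := by
    rw [conj_sT, e1, e2, ← simpleT_eq]
  have h3 : simpleT j * simpleT i = simpleT i * simpleT j := by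
    conv_lhs => rw [← h2]
    rw [mul_assoc, sT_mul_self, mul_one]
  exact h3.symm

lemma sT_braid {i j : Fin (n - 1)} (h : j.1 = i.1 + 1) :
    simpleT i * simpleT j * simpleT i = simpleT j * simpleT i * simpleT j := by
  have haj : aF j = bF i := by simp [aF, bF, Fin.ext_iff, h]
  have e1 : simpleT i (bF j) = bF j := sT_fix (by rw [bF_val]; omega) (by rw [bF_val]; omega)
  have e2 : simpleT j (aF i) = aF i := sT_fix (by rw [aF_val]; omega) (by rw [aF_val]; omega)
  have e3 : simpleT j (bF i) = bF j := by rw [← haj, sT_aF]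
  rw [conj_sT, conj_sT, haj, sT_bF, e1, e2, e3]

lemma sT_lt (i : Fin (n - 1)) {p q : Fin n} (hpq : p < q) (h : ¬(p = aF i ∧ q = bF i)) :
    simpleT i p < simpleT i q := by
  simp only [aF, bF, Fin.ext_iff] at h
  simp only [simpleT, Equiv.swap_apply_def]
  rw [Fin.lt_def] at hpq ⊢
  split_ifs <;> simp_all [Fin.ext_iff] <;> omega

end Stmt0Aux

section
variable {n : ℕ}
local notation "P" => Equiv.Perm (Fin n)
namespace Stmt0Aux

def invSet (w : P) : Finset (Fin n × Fin n) :=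
  Finset.univ.filter fun p => p.1 < p.2 ∧ w p.2 < w p.1

noncomputable def len (w : P) : ℕ := (invSet w).card

lemma mem_invSet {w : P} {p : Fin n × Fin n} :
    p ∈ invSet w ↔ p.1 < p.2 ∧ w p.2 < w p.1 := by simp [invSet]

lemma len_one : len (1 : P) = 0 := by
  rw [len, Finset.card_eq_zero, Finset.eq_empty_iff_forall_notMem]
  rintro ⟨p, q⟩ hm
  rw [mem_invSet] at hm
  exact absurd (hm.1.trans hm.2) (lt_irrefl _)

lemma len_mul_sT_of_lt {w : P} {i : Fin (n - 1)} (h : w (aF i) < w (bF i)) :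
    len (w * simpleT i) = len w + 1 := by
  set x0 : Fin n × Fin n := (aF i, bF i) with hx0def
  have hx0 : x0 ∈ invSet (w * simpleT i) := by
    rw [mem_invSet]
    refine ⟨aF_lt_bF i, ?_⟩
    simp only [Equiv.Perm.mul_apply, x0]
    rw [sT_aF, sT_bF]
    exact h
  have key : ((invSet (w * simpleT i)).erase x0).card = (invSet w).card := by
    apply Finset.card_nbij' (fun p => (simpleT i p.1, simpleT i p.2))
      (fun p => (simpleT i p.1, simpleT i p.2))
    · rintro ⟨p, q⟩ hp
      rw [Finset.mem_coe] at hp ⊢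
      rw [Finset.mem_erase] at hp
      obtain ⟨hne, hmem⟩ := hp
      rw [mem_invSet] at hmem ⊢
      refine ⟨sT_lt i hmem.1 ?_, ?_⟩
      · rintro ⟨rfl, rfl⟩; exact hne rfl
      · simpa [Equiv.Perm.mul_apply] using hmem.2
    · rintro ⟨p, q⟩ hp
      rw [Finset.mem_coe] at hp ⊢
      rw [mem_invSet] at hp
      rw [Finset.mem_erase]
      constructor
      · intro hc
        rw [hx0def, Prod.ext_iff] at hc
        have hp1 : p = bF i := by
          have := congrArg (simpleT i) hc.1
          simpa [Equiv.swap_apply_self, simpleT_eq, sT_aF] using this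
        have hq1 : q = aF i := by
          have := congrArg (simpleT i) hc.2
          simpa [Equiv.swap_apply_self, simpleT_eq, sT_bF] using this
        rw [hp1, hq1] at hp
        exact absurd (hp.1.trans (aF_lt_bF i)) (lt_irrefl _)
      · rw [mem_invSet]
        refine ⟨sT_lt i hp.1 ?_, ?_⟩
        · rintro ⟨rfl, rfl⟩
          exact absurd hp.2 (not_lt.2 (le_of_lt h))
        · simpa [Equiv.Perm.mul_apply, simpleT_eq, Equiv.swap_apply_self] using hp.2
    · rintro ⟨p, q⟩ _
      simp [simpleT_eq, Equiv.swap_apply_self]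
    · rintro ⟨p, q⟩ _
      simp [simpleT_eq, Equiv.swap_apply_self]
  have := Finset.card_erase_add_one hx0
  rw [key] at this
  rw [len, len, ← this]

lemma len_mul_sT_of_gt {w : P} {i : Fin (n - 1)} (h : w (bF i) < w (aF i)) :
    len w = len (w * simpleT i) + 1 := by
  have h2 : (w * simpleT i) (aF i) < (w * simpleT i) (bF i) := by
    simp only [Equiv.Perm.mul_apply]
    rw [sT_aF, sT_bF]; exact h
  have := len_mul_sT_of_lt h2
  rw [mul_assoc, sT_mul_self, mul_one] at this
  exact this

lemma len_inv (w : P) : len w⁻¹ = len w := by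
  rw [len, len]
  apply Finset.card_nbij' (fun p => (w⁻¹ p.2, w⁻¹ p.1)) (fun p => (w p.2, w p.1))
  · rintro ⟨p, q⟩ hp
    rw [Finset.mem_coe] at hp ⊢
    rw [mem_invSet] at hp ⊢
    exact ⟨hp.2, by simpa using hp.1⟩
  · rintro ⟨p, q⟩ hp
    rw [Finset.mem_coe] at hp ⊢
    rw [mem_invSet] at hp ⊢
    exact ⟨hp.2, by simpa using hp.1⟩
  · rintro ⟨p, q⟩ _; simp
  · rintro ⟨p, q⟩ _; simp

lemma len_sT_mul_of_lt {w : P} {i : Fin (n - 1)} (h : w⁻¹ (aF i) < w⁻¹ (bF i)) :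
    len (simpleT i * w) = len w + 1 := by
  have h1 : (simpleT i * w)⁻¹ = w⁻¹ * simpleT i := by rw [mul_inv_rev, sT_inv]
  rw [← len_inv (simpleT i * w), h1, len_mul_sT_of_lt h, len_inv]

lemma len_sT_mul_of_gt {w : P} {i : Fin (n - 1)} (h : w⁻¹ (bF i) < w⁻¹ (aF i)) :
    len w = len (simpleT i * w) + 1 := by
  have h1 : (simpleT i * w)⁻¹ = w⁻¹ * simpleT i := by rw [mul_inv_rev, sT_inv]
  rw [← len_inv (simpleT i * w), h1, ← len_mul_sT_of_gt h, len_inv]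

lemma aF_ne_bF (i : Fin (n - 1)) : aF i ≠ bF i := ne_of_lt (aF_lt_bF i)

lemma descent_trichotomy (w : P) (i : Fin (n - 1)) :
    w (aF i) < w (bF i) ∨ w (bF i) < w (aF i) := by
  rcases lt_or_ge (w (aF i)) (w (bF i)) with h | h
  · exact Or.inl h
  · refine Or.inr (lt_of_le_of_ne h ?_)
    intro hc
    exact aF_ne_bF i (w.injective hc.symm)

lemma len_sT_mul_le (i : Fin (n - 1)) (w : P) : len (simpleT i * w) ≤ len w + 1 := by
  rcases descent_trichotomy w⁻¹ i with h | h
  · exact le_of_eq (len_sT_mul_of_lt h)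
  · have := len_sT_mul_of_gt h
    omega

def piL (l : List (Fin (n - 1))) : P := (l.map simpleT).prod

lemma piL_nil : piL ([] : List (Fin (n - 1))) = 1 := rfl

lemma piL_cons (i : Fin (n - 1)) (l : List (Fin (n - 1))) :
    piL (i :: l) = simpleT i * piL l := by simp [piL]

lemma piL_append (l1 l2 : List (Fin (n - 1))) : piL (l1 ++ l2) = piL l1 * piL l2 := by
  simp [piL]

lemma len_piL_le (l : List (Fin (n - 1))) : len (piL l) ≤ l.length := by
  induction l with
  | nil => rw [piL_nil, len_one]; exact Nat.zero_le _
  | cons i l ih =>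
    rw [piL_cons]
    calc len (simpleT i * piL l) ≤ len (piL l) + 1 := len_sT_mul_le i (piL l)
    _ ≤ l.length + 1 := by omega
    _ = (i :: l).length := by simp

lemma exists_descent {w : P} (hw : w ≠ 1) : ∃ i : Fin (n - 1), w (bF i) < w (aF i) := by
  by_contra hno
  push_neg at hno
  have hlt : ∀ i : Fin (n - 1), w (aF i) < w (bF i) := by
    intro i
    rcases descent_trichotomy w i with h | h
    · exact h
    · exact absurd h (by simpa using hno i)
  have hsm : StrictMono w := by
    match n, w, hlt with
    | 0, w, hlt => intro a; exact absurd a.2 (by omega)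
    | (m + 1), w, hlt =>
      rw [Fin.strictMono_iff_lt_succ]
      intro i
      have := hlt i
      exact this
  apply hw
  have : ⇑w = id := by
    haveI : WellFoundedLT (Fin n) := Finite.to_wellFoundedLT
    apply (StrictMono.range_inj (f := ⇑w) (g := (id : Fin n → Fin n)) hsm strictMono_id).1
    rw [Set.range_id, Set.range_eq_univ]
    exact w.surjective
  ext x
  simp [this]

lemma len_pos {w : P} (hw : w ≠ 1) : 0 < len w := by
  obtain ⟨i, hi⟩ := exists_descent hw
  rw [len, Finset.card_pos]
  exact ⟨(aF i, bF i), mem_invSet.2 ⟨aF_lt_bF i, hi⟩⟩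

def Red (w : P) (l : List (Fin (n - 1))) : Prop := piL l = w ∧ l.length = len w

lemma exists_red (w : P) : ∃ l, Red w l := by
  have H : ∀ N (w : P), len w ≤ N → ∃ l, Red w l := by
    intro N
    induction N with
    | zero =>
      intro w hw
      have hw1 : w = 1 := by
        by_contra hc
        have := len_pos hc
        omega
      exact ⟨[], by rw [hw1]; exact ⟨piL_nil, by simp [len_one]⟩⟩
    | succ N ih =>
      intro w hw
      by_cases hw1 : w = 1
      · exact ⟨[], by rw [hw1]; exact ⟨piL_nil, by simp [len_one]⟩⟩
      · obtain ⟨i, hi⟩ := exists_descent hw1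
        have hlen := len_mul_sT_of_gt hi
        obtain ⟨l, hl1, hl2⟩ := ih (w * simpleT i) (by omega)
        refine ⟨l ++ [i], ?_, ?_⟩
        · rw [piL_append, hl1]
          simp only [piL_cons, piL_nil, mul_one]
          rw [mul_assoc, sT_mul_self, mul_one]
        · simp only [List.length_append, List.length_cons, List.length_nil]
          omega
  exact H (len w) w le_rfl

end Stmt0Aux
end

section
variable {n : ℕ}
local notation "P" => Equiv.Perm (Fin n)
namespace Stmt0Aux

/-- `i` is a left descent of `w`. -/
def Des (w : P) (i : Fin (n - 1)) : Prop := w⁻¹ (bF i) < w⁻¹ (aF i)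

lemma inv_sT_mul (i : Fin (n - 1)) (w : P) (x : Fin n) :
    (simpleT i * w)⁻¹ x = w⁻¹ (simpleT i x) := by
  rw [mul_inv_rev, sT_inv]; rfl

lemma red_cons {w : P} {i : Fin (n - 1)} {t : List (Fin (n - 1))} (h : Red w (i :: t)) :
    Des w i ∧ Red (simpleT i * w) t := by
  obtain ⟨hprod, hlen⟩ := h
  rw [piL_cons] at hprod
  set v := piL t with hv
  have hvw : v = simpleT i * w := by
    rw [← hprod, ← mul_assoc, sT_mul_self, one_mul]
  have hlt : len v ≤ t.length := hv ▸ len_piL_le t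
  have hle : len w ≤ len v + 1 := by
    rw [← hprod]
    exact len_sT_mul_le i v
  have hlen' : t.length + 1 = len w := by simpa using hlen
  have hlv : len v = t.length := by omega
  have hred : Red (simpleT i * w) t := by
    refine ⟨hvw ▸ hv.symm, ?_⟩
    rw [← hvw]
    omega
  have hdes : Des w i := by
    have hd : v⁻¹ (aF i) < v⁻¹ (bF i) := by
      rcases descent_trichotomy v⁻¹ i with hc | hc
      · exact hc
      · have := len_sT_mul_of_gt hc
        rw [hprod] at this
        omega
    have hwv : w = simpleT i * v := hprod.symm
    rw [Des, hwv, inv_sT_mul, inv_sT_mul, sT_aF, sT_bF]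
    exact hd
  exact ⟨hdes, hred⟩

lemma red_cons_of {w : P} {i : Fin (n - 1)} {t : List (Fin (n - 1))}
    (hd : Des w i) (h : Red (simpleT i * w) t) : Red w (i :: t) := by
  obtain ⟨hprod, hlen⟩ := h
  constructor
  · rw [piL_cons, hprod, ← mul_assoc, sT_mul_self, one_mul]
  · have : len w = len (simpleT i * w) + 1 := len_sT_mul_of_gt hd
    simp only [List.length_cons]
    omega

lemma des_comm_transfer {w : P} {i j : Fin (n - 1)} (hij : i.1 + 2 ≤ j.1)
    (hdj : Des w j) : Des (simpleT i * w) j := by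
  have e1 : simpleT i (aF j) = aF j := sT_fix (by rw [aF_val]; omega) (by rw [aF_val]; omega)
  have e2 : simpleT i (bF j) = bF j := sT_fix (by rw [bF_val]; omega) (by rw [bF_val]; omega)
  rw [Des, inv_sT_mul, inv_sT_mul, e1, e2]
  exact hdj

lemma des_comm_transfer' {w : P} {i j : Fin (n - 1)} (hij : i.1 + 2 ≤ j.1)
    (hdi : Des w i) : Des (simpleT j * w) i := by
  have e1 : simpleT j (aF i) = aF i := sT_fix (by rw [aF_val]; omega) (by rw [aF_val]; omega)
  have e2 : simpleT j (bF i) = bF i := sT_fix (by rw [bF_val]; omega) (by rw [bF_val]; omega)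
  rw [Des, inv_sT_mul, inv_sT_mul, e1, e2]
  exact hdi

lemma des_braid1 {w : P} {i j : Fin (n - 1)} (hij : j.1 = i.1 + 1)
    (hdi : Des w i) (hdj : Des w j) : Des (simpleT i * w) j := by
  have haj : aF j = bF i := by simp [aF, bF, Fin.ext_iff, hij]
  have e1 : simpleT i (aF j) = aF i := by rw [haj, sT_bF]
  have e2 : simpleT i (bF j) = bF j := sT_fix (by rw [bF_val]; omega) (by rw [bF_val]; omega)
  rw [Des, inv_sT_mul, inv_sT_mul, e1, e2]
  rw [Des, haj] at hdj
  exact hdj.trans hdi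

lemma des_braid2 {w : P} {i j : Fin (n - 1)} (hij : j.1 = i.1 + 1)
    (hdi : Des w i) (hdj : Des w j) : Des (simpleT j * (simpleT i * w)) i := by
  have haj : aF j = bF i := by simp [aF, bF, Fin.ext_iff, hij]
  have f1 : simpleT j (aF i) = aF i := sT_fix (by rw [aF_val]; omega) (by rw [aF_val]; omega)
  have f2 : simpleT j (bF i) = bF j := by rw [← haj, sT_aF]
  have f3 : simpleT i (bF j) = bF j := sT_fix (by rw [bF_val]; omega) (by rw [bF_val]; omega)
  rw [Des, inv_sT_mul, inv_sT_mul, inv_sT_mul, inv_sT_mul, f1, f2, f3, sT_aF, ← haj]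
  exact hdj

lemma des_braid3 {w : P} {i j : Fin (n - 1)} (hij : j.1 = i.1 + 1)
    (hdi : Des w i) (hdj : Des w j) : Des (simpleT j * w) i := by
  have haj : aF j = bF i := by simp [aF, bF, Fin.ext_iff, hij]
  have f1 : simpleT j (aF i) = aF i := sT_fix (by rw [aF_val]; omega) (by rw [aF_val]; omega)
  have f2 : simpleT j (bF i) = bF j := by rw [← haj, sT_aF]
  rw [Des, inv_sT_mul, inv_sT_mul, f1, f2]
  rw [Des] at hdi hdj
  rw [haj] at hdj
  exact hdj.trans hdi

lemma des_braid4 {w : P} {i j : Fin (n - 1)} (hij : j.1 = i.1 + 1)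
    (hdi : Des w i) (hdj : Des w j) : Des (simpleT i * (simpleT j * w)) j := by
  have haj : aF j = bF i := by simp [aF, bF, Fin.ext_iff, hij]
  have f1 : simpleT i (aF j) = aF i := by rw [haj, sT_bF]
  have f2 : simpleT j (aF i) = aF i := sT_fix (by rw [aF_val]; omega) (by rw [aF_val]; omega)
  have f3 : simpleT i (bF j) = bF j := sT_fix (by rw [bF_val]; omega) (by rw [bF_val]; omega)
  have f4 : simpleT j (bF j) = bF i := by rw [sT_bF, haj]
  rw [Des, inv_sT_mul, inv_sT_mul, inv_sT_mul, inv_sT_mul, f1, f2, f3, f4]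
  exact hdi

end Stmt0Aux
end

section
variable {n : ℕ}
local notation "P" => Equiv.Perm (Fin n)
namespace Stmt0Aux

open FreeMonoid

lemma hc_of {u v : FreeMonoid (Fin (n - 1))} (h : (u, v) ∈ heckeRels n) : heckeCon n u v :=
  ConGen.Rel.of u v h

lemma hc_idem (i : Fin (n - 1)) :
    heckeCon n (FreeMonoid.of i * FreeMonoid.of i) (FreeMonoid.of i) :=
  hc_of (Or.inl ⟨i, rfl⟩)

lemma hc_comm {i j : Fin (n - 1)} (h : i.1 + 2 ≤ j.1) :
    heckeCon n (FreeMonoid.of i * FreeMonoid.of j) (FreeMonoid.of j * FreeMonoid.of i) :=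
  hc_of (Or.inr (Or.inl ⟨i, j, h, rfl⟩))

lemma hc_braid {i j : Fin (n - 1)} (h : j.1 = i.1 + 1) :
    heckeCon n (FreeMonoid.of i * FreeMonoid.of j * FreeMonoid.of i)
      (FreeMonoid.of j * FreeMonoid.of i * FreeMonoid.of j) :=
  hc_of (Or.inr (Or.inr ⟨i, j, h, rfl⟩))

lemma mat_step {N : ℕ}
    (ih : ∀ w : P, ∀ u v : List (Fin (n - 1)), len w ≤ N → Red w u → Red w v →
      heckeCon n (FreeMonoid.ofList u) (FreeMonoid.ofList v))
    {w : P} {i j : Fin (n - 1)} {u' v' : List (Fin (n - 1))}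
    (hw : len w = N + 1) (hij : i.1 < j.1)
    (hu : Red w (i :: u')) (hv : Red w (j :: v')) :
    heckeCon n (FreeMonoid.ofList (i :: u')) (FreeMonoid.ofList (j :: v')) := by
  obtain ⟨hdi, hu'⟩ := red_cons hu
  obtain ⟨hdj, hv'⟩ := red_cons hv
  have hlu' : len (simpleT i * w) = N := by
    have h1 := hu.2
    have h2 := hu'.2
    simp only [List.length_cons] at h1
    omega
  have hlv' : len (simpleT j * w) = N := by
    have h1 := hv.2
    have h2 := hv'.2
    simp only [List.length_cons] at h1
    omega
  by_cases hadj : j.1 = i.1 + 1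
  · -- braid case
    obtain ⟨r, hr⟩ := exists_red (simpleT i * (simpleT j * (simpleT i * w)))
    have c2 : Red (simpleT j * (simpleT i * w)) (i :: r) :=
      red_cons_of (des_braid2 hadj hdi hdj) hr
    have c1 : Red (simpleT i * w) (j :: i :: r) :=
      red_cons_of (des_braid1 hadj hdi hdj) c2
    have hcu : heckeCon n (ofList u') (ofList (j :: i :: r)) :=
      ih _ u' _ (le_of_eq hlu') hu' c1
    have hw3 : simpleT j * (simpleT i * (simpleT j * w))
        = simpleT i * (simpleT j * (simpleT i * w)) := by
      simp only [← mul_assoc]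
      rw [← sT_braid hadj]
    have hr' : Red (simpleT j * (simpleT i * (simpleT j * w))) r := by rw [hw3]; exact hr
    have c2' : Red (simpleT i * (simpleT j * w)) (j :: r) :=
      red_cons_of (des_braid4 hadj hdi hdj) hr'
    have c1' : Red (simpleT j * w) (i :: j :: r) :=
      red_cons_of (des_braid3 hadj hdi hdj) c2'
    have hcv : heckeCon n (ofList v') (ofList (i :: j :: r)) :=
      ih _ v' _ (le_of_eq hlv') hv' c1'
    have hmid : heckeCon n (ofList (i :: j :: i :: r)) (ofList (j :: i :: j :: r)) := by
      have := (heckeCon n).mul (hc_braid hadj) ((heckeCon n).refl (ofList r))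
      simpa [FreeMonoid.ofList_cons, mul_assoc] using this
    refine (heckeCon n).trans ?_ ((heckeCon n).trans hmid ?_)
    · have := (heckeCon n).mul ((heckeCon n).refl (FreeMonoid.of i)) hcu
      simpa [FreeMonoid.ofList_cons] using this
    · refine (heckeCon n).symm ?_
      have := (heckeCon n).mul ((heckeCon n).refl (FreeMonoid.of j)) hcv
      simpa [FreeMonoid.ofList_cons] using this
  · -- commuting case
    have hcm : i.1 + 2 ≤ j.1 := by omega
    have hcomm : simpleT i * (simpleT j * w) = simpleT j * (simpleT i * w) := by
      simp only [← mul_assoc]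
      rw [sT_comm hcm]
    obtain ⟨r, hr⟩ := exists_red (simpleT j * (simpleT i * w))
    have c1 : Red (simpleT i * w) (j :: r) :=
      red_cons_of (des_comm_transfer hcm hdj) hr
    have hcu : heckeCon n (ofList u') (ofList (j :: r)) :=
      ih _ u' _ (le_of_eq hlu') hu' c1
    have hr2 : Red (simpleT i * (simpleT j * w)) r := by rw [hcomm]; exact hr
    have c1' : Red (simpleT j * w) (i :: r) :=
      red_cons_of (des_comm_transfer' hcm hdi) hr2
    have hcv : heckeCon n (ofList v') (ofList (i :: r)) :=
      ih _ v' _ (le_of_eq hlv') hv' c1'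
    have hmid : heckeCon n (ofList (i :: j :: r)) (ofList (j :: i :: r)) := by
      have := (heckeCon n).mul (hc_comm hcm) ((heckeCon n).refl (ofList r))
      simpa [FreeMonoid.ofList_cons, mul_assoc] using this
    refine (heckeCon n).trans ?_ ((heckeCon n).trans hmid ?_)
    · have := (heckeCon n).mul ((heckeCon n).refl (FreeMonoid.of i)) hcu
      simpa [FreeMonoid.ofList_cons] using this
    · refine (heckeCon n).symm ?_
      have := (heckeCon n).mul ((heckeCon n).refl (FreeMonoid.of j)) hcv
      simpa [FreeMonoid.ofList_cons] using this

lemma matsumoto : ∀ N : ℕ, ∀ w : P, ∀ u v : List (Fin (n - 1)),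
    len w ≤ N → Red w u → Red w v →
    heckeCon n (FreeMonoid.ofList u) (FreeMonoid.ofList v) := by
  intro N
  induction N with
  | zero =>
    intro w u v hw hu hv
    have hu0 : u = [] := List.length_eq_zero_iff.1 (by have := hu.2; omega)
    have hv0 : v = [] := List.length_eq_zero_iff.1 (by have := hv.2; omega)
    rw [hu0, hv0]
    exact (heckeCon n).refl _
  | succ N ih =>
    intro w u v hw hu hv
    rcases Nat.lt_or_ge (len w) (N + 1) with hlt | hge
    · exact ih w u v (by omega) hu hv
    · have hw' : len w = N + 1 := by omega
      cases u with
      | nil =>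
        have := hu.2
        simp only [List.length_nil] at this
        omega
      | cons i u' =>
        cases v with
        | nil =>
          have := hv.2
          simp only [List.length_nil] at this
          omega
        | cons j v' =>
          rcases lt_trichotomy i.1 j.1 with h | h | h
          · exact mat_step ih hw' h hu hv
          · have hijeq : i = j := Fin.ext h
            subst hijeq
            obtain ⟨hdi, hu'⟩ := red_cons hu
            obtain ⟨_, hv'⟩ := red_cons hv
            have hlu' : len (simpleT i * w) ≤ N := by
              have h1 := hu.2
              have h2 := hu'.2
              simp only [List.length_cons] at h1
              omega
            have hcon := ih (simpleT i * w) u' v' hlu' hu' hv'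
            have := (heckeCon n).mul ((heckeCon n).refl (FreeMonoid.of i)) hcon
            simpa [FreeMonoid.ofList_cons] using this
          · exact (heckeCon n).symm (mat_step ih hw' h hv hu)

lemma exists_red_con (l : List (Fin (n - 1))) :
    ∃ w r, Red w r ∧ heckeCon n (FreeMonoid.ofList l) (FreeMonoid.ofList r) := by
  induction l using List.reverseRecOn with
  | nil => exact ⟨1, [], ⟨piL_nil, by simp [len_one]⟩, (heckeCon n).refl _⟩
  | append_singleton l i ihl =>
    obtain ⟨w, r, hred, hcon⟩ := ihl
    rcases descent_trichotomy w i with hlt | hgt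
    · refine ⟨w * simpleT i, r ++ [i], ⟨?_, ?_⟩, ?_⟩
      · rw [piL_append, hred.1, piL_cons, piL_nil, mul_one]
      · rw [List.length_append, len_mul_sT_of_lt hlt]
        simp [hred.2]
      · have := (heckeCon n).mul hcon ((heckeCon n).refl (FreeMonoid.of i))
        simpa [FreeMonoid.ofList_append, FreeMonoid.ofList_singleton] using this
    · have hlen := len_mul_sT_of_gt hgt
      obtain ⟨r2, hr2⟩ := exists_red (w * simpleT i)
      have hred2 : Red w (r2 ++ [i]) := by
        constructor
        · rw [piL_append, hr2.1, piL_cons, piL_nil, mul_one, mul_assoc, sT_mul_self, mul_one]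
        · rw [List.length_append]
          have := hr2.2
          simp only [List.length_cons, List.length_nil]
          omega
      have hmats : heckeCon n (FreeMonoid.ofList r) (FreeMonoid.ofList (r2 ++ [i])) :=
        matsumoto (len w) w r _ le_rfl hred hred2
      refine ⟨w, r2 ++ [i], hred2, ?_⟩
      have c1 : heckeCon n (FreeMonoid.ofList (l ++ [i])) (FreeMonoid.ofList (r ++ [i])) := by
        have := (heckeCon n).mul hcon ((heckeCon n).refl (FreeMonoid.of i))
        simpa [FreeMonoid.ofList_append, FreeMonoid.ofList_singleton] using this
      have c2 : heckeCon n (FreeMonoid.ofList (r ++ [i])) (FreeMonoid.ofList ((r2 ++ [i]) ++ [i])) := by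
        have := (heckeCon n).mul hmats ((heckeCon n).refl (FreeMonoid.of i))
        simpa [FreeMonoid.ofList_append, FreeMonoid.ofList_singleton, mul_assoc] using this
      have c3 : heckeCon n (FreeMonoid.ofList ((r2 ++ [i]) ++ [i])) (FreeMonoid.ofList (r2 ++ [i])) := by
        have := (heckeCon n).mul ((heckeCon n).refl (FreeMonoid.ofList r2)) (hc_idem i)
        simpa [FreeMonoid.ofList_append, FreeMonoid.ofList_singleton, mul_assoc] using this
      exact (heckeCon n).trans c1 ((heckeCon n).trans c2 c3)

end Stmt0Aux
end

section
variable {n : ℕ}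
local notation "P" => Equiv.Perm (Fin n)
namespace Stmt0Aux

lemma pair_mul_pair (a b : P) : ({1, a} : Set P) * {1, b} = {1, a, b, a * b} := by
  ext x
  simp only [Set.mem_mul, Set.mem_insert_iff, Set.mem_singleton_iff]
  constructor
  · rintro ⟨y, (rfl | rfl), z, (rfl | rfl), rfl⟩ <;> simp
  · rintro (h | h | h | h)
    exacts [⟨1, Or.inl rfl, 1, Or.inl rfl, by simp [h]⟩,
      ⟨a, Or.inr rfl, 1, Or.inl rfl, by simp [h]⟩,
      ⟨1, Or.inl rfl, b, Or.inr rfl, by simp [h]⟩,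
      ⟨a, Or.inr rfl, b, Or.inr rfl, h.symm⟩]

lemma pair_idem {a : P} (ha : a * a = 1) : ({1, a} : Set P) * {1, a} = {1, a} := by
  rw [pair_mul_pair, ha]
  ext x; simp; tauto

lemma pair_comm_sets {a b : P} (h : a * b = b * a) :
    ({1, a} : Set P) * {1, b} = ({1, b} : Set P) * {1, a} := by
  rw [pair_mul_pair, pair_mul_pair, h]
  ext x; simp; tauto

lemma pair_mul_pair_mul_pair (a b : P) (ha : a * a = 1) :
    ({1, a} : Set P) * {1, b} * {1, a} = {1, a, b, a * b, b * a, a * b * a} := by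
  rw [pair_mul_pair]
  ext x
  simp only [Set.mem_mul, Set.mem_insert_iff, Set.mem_singleton_iff]
  constructor
  · rintro ⟨y, (rfl | rfl | rfl | rfl), z, (rfl | rfl), rfl⟩ <;>
      simp [ha, mul_assoc] <;> tauto
  · rintro (h | h | h | h | h | h)
    exacts [⟨1, by tauto, 1, by tauto, by simp [h]⟩,
      ⟨a, by tauto, 1, by tauto, by simp [h]⟩,
      ⟨b, by tauto, 1, by tauto, by simp [h]⟩,
      ⟨a * b, by tauto, 1, by tauto, by simp [h]⟩,
      ⟨b, by tauto, a, by tauto, h.symm⟩,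
      ⟨a * b, by tauto, a, by tauto, h.symm⟩]

lemma pair_braid_sets {a b : P} (ha : a * a = 1) (hb : b * b = 1) (hbr : a * b * a = b * a * b) :
    ({1, a} : Set P) * {1, b} * {1, a} = ({1, b} : Set P) * {1, a} * {1, b} := by
  rw [pair_mul_pair_mul_pair a b ha, pair_mul_pair_mul_pair b a hb, hbr]
  ext x; simp; tauto

def fGen (n : ℕ) (i : Fin (n - 1)) : Set (Equiv.Perm (Fin n)) := {1, simpleT i}

noncomputable def FF (n : ℕ) : FreeMonoid (Fin (n - 1)) →* Set (Equiv.Perm (Fin n)) :=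
  FreeMonoid.lift (fGen n)

lemma hFker : heckeCon n ≤ Con.ker (FF n) := by
  apply Con.conGen_le.2
  rintro x y (⟨i, hp⟩ | ⟨i, j, hij, hp⟩ | ⟨i, j, hij, hp⟩) <;>
    rw [Prod.ext_iff] at hp <;> obtain ⟨h1, h2⟩ := hp <;> subst h1 <;> subst h2 <;>
    rw [Con.ker_rel] <;>
    simp only [map_mul, FF, FreeMonoid.lift_eval_of, fGen]
  · exact pair_idem (sT_mul_self i)
  · exact pair_comm_sets (sT_comm hij)
  · exact pair_braid_sets (sT_mul_self i) (sT_mul_self j) (sT_braid hij)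

lemma FF_ofList (l : List (Fin (n - 1))) :
    FF n (FreeMonoid.ofList l) = {x : Equiv.Perm (Fin n) | ∃ t, t.Sublist l ∧ piL t = x} := by
  induction l with
  | nil =>
    ext x
    simp only [FreeMonoid.ofList_nil, map_one, Set.mem_setOf_eq]
    constructor
    · rintro rfl
      exact ⟨[], List.Sublist.refl _, rfl⟩
    · rintro ⟨t, ht, rfl⟩
      rw [List.sublist_nil.1 ht]
      rfl
  | cons i l ih =>
    rw [FreeMonoid.ofList_cons, map_mul, FF, FreeMonoid.lift_eval_of, ← FF, ih]
    ext x
    simp only [fGen, Set.mem_mul, Set.mem_insert_iff, Set.mem_singleton_iff, Set.mem_setOf_eq]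
    constructor
    · rintro ⟨y, (rfl | rfl), z, ⟨t, ht, rfl⟩, rfl⟩
      · exact ⟨t, ht.cons i, by simp⟩
      · exact ⟨i :: t, ht.cons₂ i, by rw [piL_cons]⟩
    · rintro ⟨t, ht, rfl⟩
      rcases List.sublist_cons_iff.1 ht with ht' | ⟨r, rfl, hr⟩
      · exact ⟨1, Or.inl rfl, piL t, ⟨t, ht', rfl⟩, one_mul _⟩
      · exact ⟨simpleT i, Or.inr rfl, piL r, ⟨r, hr, rfl⟩, (piL_cons i r).symm⟩

noncomputable def phiH (n : ℕ) : Hecke n →* Set (Equiv.Perm (Fin n)) := (heckeCon n).lift (FF n) hFker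

lemma phiH_mk (x : FreeMonoid (Fin (n - 1))) : phiH n ((heckeCon n).mk' x) = FF n x :=
  Con.lift_mk' hFker x

lemma phiH_inj : Function.Injective (phiH n) := by
  intro x y hxy
  obtain ⟨u, rfl⟩ := Con.mk'_surjective (c := heckeCon n) x
  obtain ⟨v, rfl⟩ := Con.mk'_surjective (c := heckeCon n) y
  obtain ⟨wu, ru, hru, hcu⟩ := exists_red_con (n := n) (FreeMonoid.toList u)
  obtain ⟨wv, rv, hrv, hcv⟩ := exists_red_con (n := n) (FreeMonoid.toList v)
  rw [FreeMonoid.ofList_toList] at hcu hcv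
  rw [phiH_mk, phiH_mk] at hxy
  have key : FF n (FreeMonoid.ofList ru) = FF n (FreeMonoid.ofList rv) := by
    rw [← (Con.ker_rel (FF n)).1 (hFker hcu), ← (Con.ker_rel (FF n)).1 (hFker hcv)]
    exact hxy
  rw [FF_ofList, FF_ofList] at key
  have h1 : ∃ t, t.Sublist rv ∧ piL t = wu := by
    rw [← Set.mem_setOf_eq (p := fun x => ∃ t, t.Sublist rv ∧ piL t = x), ← key]
    exact ⟨ru, List.Sublist.refl _, hru.1⟩
  have h2 : ∃ t, t.Sublist ru ∧ piL t = wv := by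
    rw [← Set.mem_setOf_eq (p := fun x => ∃ t, t.Sublist ru ∧ piL t = x), key]
    exact ⟨rv, List.Sublist.refl _, hrv.1⟩
  obtain ⟨t1, ht1, hpt1⟩ := h1
  obtain ⟨t2, ht2, hpt2⟩ := h2
  have hle1 : len wu ≤ len wv := by
    have a1 := len_piL_le t1
    have a2 := ht1.length_le
    rw [hpt1] at a1
    have := hrv.2
    omega
  have hle2 : len wv ≤ len wu := by
    have a1 := len_piL_le t2
    have a2 := ht2.length_le
    rw [hpt2] at a1
    have := hru.2
    omega
  have hlen : len wu = len wv := le_antisymm hle1 hle2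
  have ht1full : t1 = rv := by
    apply ht1.eq_of_length
    have a1 := len_piL_le t1
    rw [hpt1] at a1
    have a2 := ht1.length_le
    have := hrv.2
    omega
  have hwuv : wu = wv := by rw [← hpt1, ht1full, hrv.1]
  have hmats : heckeCon n (FreeMonoid.ofList ru) (FreeMonoid.ofList rv) :=
    matsumoto (len wu) wu ru rv le_rfl hru (hwuv ▸ hrv)
  have : heckeCon n u v :=
    (heckeCon n).trans hcu ((heckeCon n).trans hmats ((heckeCon n).symm hcv))
  exact (Con.eq _).2 this

end Stmt0Aux
end

section
variable {n : ℕ}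
namespace Stmt0Aux

lemma FF_of (i : Fin (n - 1)) :
    FF n (FreeMonoid.of i) = ({1, simpleT i} : Set (Equiv.Perm (Fin n))) := rfl

lemma phiH_mem (x : Hecke n) :
    phiH n x ∈ Submonoid.closure
      (Set.range fun i : Fin (n - 1) => ({1, simpleT i} : Set (Equiv.Perm (Fin n)))) := by
  obtain ⟨u, rfl⟩ := Con.mk'_surjective (c := heckeCon n) x
  rw [phiH_mk]
  induction u using FreeMonoid.recOn with
  | one => rw [map_one]; exact one_mem _
  | of_mul i xs ih =>
    rw [map_mul]
    exact mul_mem (FF_of i ▸ Submonoid.subset_closure ⟨i, rfl⟩) ih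

lemma phiH_surj : ∀ y ∈ Submonoid.closure
    (Set.range fun i : Fin (n - 1) => ({1, simpleT i} : Set (Equiv.Perm (Fin n)))),
    ∃ x : Hecke n, phiH n x = y := by
  intro y hy
  induction hy using Submonoid.closure_induction with
  | mem z hz =>
    obtain ⟨i, rfl⟩ := hz
    exact ⟨heckeGen n i, by rw [heckeGen, phiH_mk]; rfl⟩
  | one => exact ⟨1, map_one _⟩
  | mul z w hz hw ihz ihw =>
    obtain ⟨xz, rfl⟩ := ihz
    obtain ⟨xw, rfl⟩ := ihw
    exact ⟨xz * xw, map_mul _ _ _⟩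

end Stmt0Aux
end


/-- The submonoid of the power set monoid `P(S_n)` generated by the
sets `{id, s_i}` is isomorphic to the 0-Hecke monoid `H_n`, via `e_i ↦ {id, s_i}`. -/
theorem stmt_0 (n : ℕ) :
    ∃ φ : Hecke n ≃* (Submonoid.closure
        (Set.range fun i : Fin (n - 1) => ({1, simpleT i} : Set (Equiv.Perm (Fin n))))),
      ∀ i : Fin (n - 1),
        (φ (heckeGen n i) : Set (Equiv.Perm (Fin n))) = {1, simpleT i} := by
  classical
  set S := Submonoid.closure
    (Set.range fun i : Fin (n - 1) => ({1, simpleT i} : Set (Equiv.Perm (Fin n)))) with hS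
  let f : Hecke n →* S := (Stmt0Aux.phiH n).codRestrict S fun x => Stmt0Aux.phiH_mem x
  have hinj : Function.Injective f := by
    intro a b hab
    exact Stmt0Aux.phiH_inj (congrArg Subtype.val hab)
  have hsurj : Function.Surjective f := by
    rintro ⟨y, hy⟩
    obtain ⟨x, hx⟩ := Stmt0Aux.phiH_surj y hy
    exact ⟨x, Subtype.ext hx⟩
  refine ⟨MulEquiv.ofBijective f ⟨hinj, hsurj⟩, fun i => ?_⟩
  show ((f (heckeGen n i) : S) : Set (Equiv.Perm (Fin n))) = _
  have : Stmt0Aux.phiH n (heckeGen n i) = ({1, simpleT i} : Set (Equiv.Perm (Fin n))) := by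
    rw [heckeGen, Stmt0Aux.phiH_mk]
    rfl
  exact this
end

section
/- The 0-Hecke monoid H_n is J-trivial: if two elements a, b of H_n generate the same two-sided ideal (i.e. H_n a H_n = H_n b H_n), then a = b. -/
open Pointwise

namespace JT
variable {n : ℕ}

def lo (i : Fin (n-1)) : Fin n := ⟨i.1, by have := i.2; omega⟩
def hi (i : Fin (n-1)) : Fin n := ⟨i.1+1, by have := i.2; omega⟩

lemma simpleT_eq (i : Fin (n-1)) : simpleT i = Equiv.swap (lo i) (hi i) := rfl

@[simp] lemma lo_val (i : Fin (n-1)) : (lo i).1 = i.1 := rfl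
@[simp] lemma hi_val (i : Fin (n-1)) : (hi i).1 = i.1 + 1 := rfl

@[simp] lemma sT_lo (i : Fin (n-1)) : simpleT i (lo i) = hi i := by
  rw [simpleT_eq]; exact Equiv.swap_apply_left _ _

@[simp] lemma sT_hi (i : Fin (n-1)) : simpleT i (hi i) = lo i := by
  rw [simpleT_eq]; exact Equiv.swap_apply_right _ _

lemma sT_other {i : Fin (n-1)} {x : Fin n} (h1 : x ≠ lo i) (h2 : x ≠ hi i) :
    simpleT i x = x := by
  rw [simpleT_eq]; exact Equiv.swap_apply_of_ne_of_ne h1 h2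

lemma sT_other' {i : Fin (n-1)} {x : Fin n} (h : x.1 ≠ i.1 ∧ x.1 ≠ i.1 + 1) :
    simpleT i x = x :=
  sT_other (by simp [Fin.ext_iff, h.1]) (by simp [Fin.ext_iff, h.2])

@[simp] lemma sT_sT (i : Fin (n-1)) : simpleT i * simpleT i = 1 := by
  rw [simpleT_eq]; exact Equiv.swap_mul_self _ _

@[simp] lemma sT_inv (i : Fin (n-1)) : (simpleT i)⁻¹ = simpleT i := by
  rw [simpleT_eq]; exact Equiv.swap_inv _ _

lemma swap_lt {i : Fin (n-1)} {x y : Fin n} (hxy : x < y)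
    (h : ¬(x = lo i ∧ y = hi i)) : simpleT i x < simpleT i y := by
  rw [simpleT_eq, Equiv.swap_apply_def, Equiv.swap_apply_def]
  simp only [Fin.ext_iff, lo, hi, not_and] at h ⊢
  split_ifs with h1 h2 h3 h4 h5 <;>
    simp only [Fin.lt_def, Fin.ext_iff, lo, hi] at * <;> omega

/-- commuting disjoint adjacent swaps -/
lemma sT_comm {i j : Fin (n-1)} (hij : i.1 + 2 ≤ j.1) :
    simpleT i * simpleT j = simpleT j * simpleT i := by
  have h1 : simpleT i (lo j) = lo j := sT_other' ⟨by simp only [lo_val]; omega, by simp only [lo_val]; omega⟩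
  have h2 : simpleT i (hi j) = hi j := by
    have := j.2
    exact sT_other' ⟨by simp only [lo_val, hi_val]; omega, by simp only [lo_val, hi_val]; omega⟩
  have key := Equiv.swap_apply_apply (simpleT i) (lo j) (hi j)
  rw [h1, h2, ← simpleT_eq, sT_inv] at key
  have e : simpleT j * simpleT i = simpleT i * simpleT j := by
    nth_rewrite 1 [key]
    rw [mul_assoc (simpleT i * simpleT j), sT_sT, mul_one]
  exact e.symm

/-- braid identity for adjacent swaps -/
lemma sT_braid {i j : Fin (n-1)} (hij : j.1 = i.1 + 1) :
    simpleT i * simpleT j * simpleT i = simpleT j * simpleT i * simpleT j := by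
  have hji : lo j = hi i := by simp [Fin.ext_iff, hij]
  have h1 : simpleT i (lo j) = lo i := by rw [hji, sT_hi]
  have h2 : simpleT i (hi j) = hi j := by
    have := j.2
    exact sT_other' ⟨by simp only [lo_val, hi_val]; omega, by simp only [lo_val, hi_val]; omega⟩
  have h3 : simpleT j (lo i) = lo i := by
    refine sT_other' ⟨by simp only [lo_val, hi_val]; omega, by simp only [lo_val, hi_val]; omega⟩
  have h4 : simpleT j (hi i) = hi j := by rw [← hji, sT_lo]
  have k1 := Equiv.swap_apply_apply (simpleT i) (lo j) (hi j)
  rw [h1, h2, ← simpleT_eq, sT_inv] at k1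
  have k2 := Equiv.swap_apply_apply (simpleT j) (lo i) (hi i)
  rw [h3, h4, ← simpleT_eq, sT_inv] at k2
  exact k1.symm.trans k2

/-- the right sorting operator -/
def fop (i : Fin (n-1)) (w : Equiv.Perm (Fin n)) : Equiv.Perm (Fin n) :=
  if w (lo i) < w (hi i) then w * simpleT i else w

lemma mulsT_lo (w : Equiv.Perm (Fin n)) (i : Fin (n-1)) :
    (w * simpleT i) (lo i) = w (hi i) := by
  simp [Equiv.Perm.mul_apply]

lemma mulsT_hi (w : Equiv.Perm (Fin n)) (i : Fin (n-1)) :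
    (w * simpleT i) (hi i) = w (lo i) := by
  simp [Equiv.Perm.mul_apply]

lemma fop_fop (i : Fin (n-1)) (w : Equiv.Perm (Fin n)) : fop i (fop i w) = fop i w := by
  by_cases h : w (lo i) < w (hi i)
  · have h2 : ¬ ((w * simpleT i) (lo i) < (w * simpleT i) (hi i)) := by
      rw [mulsT_lo, mulsT_hi]; exact not_lt.2 h.le
    have e : fop i w = w * simpleT i := by rw [fop]; exact if_pos h
    rw [e, fop, if_neg h2]
  · have e : fop i w = w := by rw [fop]; exact if_neg h
    rw [e, fop, if_neg h]

lemma fop_pos {i : Fin (n-1)} {w : Equiv.Perm (Fin n)} (h : w (lo i) < w (hi i)) :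
    fop i w = w * simpleT i := by rw [fop]; exact if_pos h

lemma fop_neg {i : Fin (n-1)} {w : Equiv.Perm (Fin n)} (h : ¬ w (lo i) < w (hi i)) :
    fop i w = w := by rw [fop]; exact if_neg h

lemma mulsT_other {i : Fin (n-1)} (w : Equiv.Perm (Fin n)) {x : Fin n}
    (h : x.1 ≠ i.1 ∧ x.1 ≠ i.1 + 1) : (w * simpleT i) x = w x := by
  rw [Equiv.Perm.mul_apply, sT_other' h]

lemma fop_comm {i j : Fin (n-1)} (hij : i.1 + 2 ≤ j.1) (w : Equiv.Perm (Fin n)) :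
    fop i (fop j w) = fop j (fop i w) := by
  have hjn := j.2
  have e2 : ∀ v : Equiv.Perm (Fin n), (v * simpleT j) (lo i) = v (lo i) :=
    fun v => mulsT_other v ⟨by simp; omega, by simp; omega⟩
  have e3 : ∀ v : Equiv.Perm (Fin n), (v * simpleT j) (hi i) = v (hi i) :=
    fun v => mulsT_other v ⟨by simp; omega, by simp; omega⟩
  have e4 : ∀ v : Equiv.Perm (Fin n), (v * simpleT i) (lo j) = v (lo j) :=
    fun v => mulsT_other v ⟨by simp; omega, by simp; omega⟩
  have e5 : ∀ v : Equiv.Perm (Fin n), (v * simpleT i) (hi j) = v (hi j) :=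
    fun v => mulsT_other v ⟨by simp; omega, by simp; omega⟩
  have assoc : w * simpleT j * simpleT i = w * simpleT i * simpleT j := by
    rw [mul_assoc, mul_assoc, ← sT_comm hij]
  by_cases h1 : w (lo i) < w (hi i) <;> by_cases h2 : w (lo j) < w (hi j)
  · have t1 : fop j w = w * simpleT j := fop_pos h2
    have t2 : fop i w = w * simpleT i := fop_pos h1
    have t3 : fop i (w * simpleT j) = w * simpleT j * simpleT i :=
      fop_pos (by rw [e2, e3]; exact h1)
    have t4 : fop j (w * simpleT i) = w * simpleT i * simpleT j :=
      fop_pos (by rw [e4, e5]; exact h2)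
    rw [t1, t2, t3, t4, assoc]
  · have t1 : fop j w = w := fop_neg h2
    have t2 : fop i w = w * simpleT i := fop_pos h1
    have t4 : fop j (w * simpleT i) = w * simpleT i := fop_neg (by rw [e4, e5]; exact h2)
    rw [t1, t2, t4]
  · have t1 : fop j w = w * simpleT j := fop_pos h2
    have t2 : fop i w = w := fop_neg h1
    have t3 : fop i (w * simpleT j) = w * simpleT j := fop_neg (by rw [e2, e3]; exact h1)
    rw [t1, t2, t3, t1]
  · have t1 : fop j w = w := fop_neg h2
    have t2 : fop i w = w := fop_neg h1
    rw [t1, t2, t1]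

lemma fop_braid {i j : Fin (n-1)} (hij : j.1 = i.1 + 1) (w : Equiv.Perm (Fin n)) :
    fop i (fop j (fop i w)) = fop j (fop i (fop j w)) := by
  have hjn := j.2
  have hP : lo j = hi i := by simp [Fin.ext_iff, hij]
  have eA_lo : ∀ v : Equiv.Perm (Fin n), (v * simpleT i) (lo i) = v (hi i) := fun v => mulsT_lo v i
  have eA_hi : ∀ v : Equiv.Perm (Fin n), (v * simpleT i) (hi i) = v (lo i) := fun v => mulsT_hi v i
  have eA_loj : ∀ v : Equiv.Perm (Fin n), (v * simpleT i) (lo j) = v (lo i) := by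
    intro v; rw [hP, eA_hi]
  have eA_hij : ∀ v : Equiv.Perm (Fin n), (v * simpleT i) (hi j) = v (hi j) :=
    fun v => mulsT_other v ⟨by simp; omega, by simp; omega⟩
  have eB_lo : ∀ v : Equiv.Perm (Fin n), (v * simpleT j) (lo i) = v (lo i) :=
    fun v => mulsT_other v ⟨by simp; omega, by simp; omega⟩
  have eB_hi : ∀ v : Equiv.Perm (Fin n), (v * simpleT j) (hi i) = v (hi j) := by
    intro v; rw [← hP, mulsT_lo]
  have eB_loj : ∀ v : Equiv.Perm (Fin n), (v * simpleT j) (lo j) = v (hi j) := fun v => mulsT_lo v j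
  have eB_hij : ∀ v : Equiv.Perm (Fin n), (v * simpleT j) (hi j) = v (lo j) := fun v => mulsT_hi v j
  have wlj : w (lo j) = w (hi i) := by rw [hP]
  have braid : w * simpleT i * simpleT j * simpleT i = w * simpleT j * simpleT i * simpleT j := by
    rw [mul_assoc, mul_assoc, mul_assoc, mul_assoc, ← mul_assoc (simpleT i),
      ← mul_assoc (simpleT j), sT_braid hij]
  by_cases hab : w (lo i) < w (hi i) <;> by_cases hbc : w (lo j) < w (hi j)
  · -- a < b < c
    have t1 : fop i w = w * simpleT i := fop_pos hab
    have t2 : fop j (w * simpleT i) = w * simpleT i * simpleT j :=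
      fop_pos (by rw [eA_loj, eA_hij]; rw [wlj] at hbc; exact hab.trans hbc)
    have t3 : fop i (w * simpleT i * simpleT j) = w * simpleT i * simpleT j * simpleT i :=
      fop_pos (by rw [eB_lo, eA_lo, eB_hi, eA_hij, ← wlj]; exact hbc)
    have r1 : fop j w = w * simpleT j := fop_pos hbc
    have r2 : fop i (w * simpleT j) = w * simpleT j * simpleT i :=
      fop_pos (by rw [eB_lo, eB_hi]; rw [wlj] at hbc; exact hab.trans hbc)
    have r3 : fop j (w * simpleT j * simpleT i) = w * simpleT j * simpleT i * simpleT j :=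
      fop_pos (by rw [eA_loj, eB_lo, eA_hij, eB_hij, wlj]; exact hab)
    rw [t1, t2, t3, r1, r2, r3]; exact braid
  · -- a < b, c < b
    by_cases hac : w (lo i) < w (hi j)
    · -- a < c < b
      have t1 : fop i w = w * simpleT i := fop_pos hab
      have t2 : fop j (w * simpleT i) = w * simpleT i * simpleT j :=
        fop_pos (by rw [eA_loj, eA_hij]; exact hac)
      have t3 : fop i (w * simpleT i * simpleT j) = w * simpleT i * simpleT j :=
        fop_neg (by rw [eB_lo, eA_lo, eB_hi, eA_hij, ← wlj]; exact hbc)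
      have r1 : fop j w = w := fop_neg hbc
      rw [r1, t1, t2, t3]
    · -- c < a < b
      have t1 : fop i w = w * simpleT i := fop_pos hab
      have t2 : fop j (w * simpleT i) = w * simpleT i :=
        fop_neg (by rw [eA_loj, eA_hij]; exact hac)
      have t3 : fop i (w * simpleT i) = w * simpleT i :=
        fop_neg (by rw [eA_lo, eA_hi]; exact fun hh => (hab.not_gt hh).elim)
      have r1 : fop j w = w := fop_neg hbc
      rw [r1, t1, t2, t3]
  · -- b < a, b < c
    by_cases hac : w (lo i) < w (hi j)
    · -- b < a < c
      have t1 : fop i w = w := fop_neg hab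
      have r1 : fop j w = w * simpleT j := fop_pos hbc
      have r2 : fop i (w * simpleT j) = w * simpleT j * simpleT i :=
        fop_pos (by rw [eB_lo, eB_hi]; exact hac)
      have r3 : fop j (w * simpleT j * simpleT i) = w * simpleT j * simpleT i :=
        fop_neg (by rw [eA_loj, eB_lo, eA_hij, eB_hij, wlj]; exact hab)
      rw [t1, r1, r2, r3]
    · -- b < c < a
      have t1 : fop i w = w := fop_neg hab
      have r1 : fop j w = w * simpleT j := fop_pos hbc
      have r2 : fop i (w * simpleT j) = w * simpleT j :=
        fop_neg (by rw [eB_lo, eB_hi]; exact hac)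
      have r3 : fop j (w * simpleT j) = w * simpleT j :=
        fop_neg (by rw [eB_loj, eB_hij]; exact hbc.not_gt)
      rw [t1, r1, r2, r3]
  · -- b < a, c < b
    have t1 : fop i w = w := fop_neg hab
    have r1 : fop j w = w := fop_neg hbc
    rw [t1, r1, t1, r1]


end JT

namespace JT
variable {n : ℕ}

/-- inversion count -/
def invc (w : Equiv.Perm (Fin n)) : ℕ :=
  ((Finset.univ : Finset (Fin n × Fin n)).filter fun p => p.1 < p.2 ∧ w p.2 < w p.1).card

lemma invc_lt {i : Fin (n-1)} {w : Equiv.Perm (Fin n)} (h : w (lo i) < w (hi i)) :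
    invc w < invc (w * simpleT i) := by
  classical
  set S := ((Finset.univ : Finset (Fin n × Fin n)).filter fun p => p.1 < p.2 ∧ w p.2 < w p.1)
  set T := ((Finset.univ : Finset (Fin n × Fin n)).filter
    fun p => p.1 < p.2 ∧ (w * simpleT i) p.2 < (w * simpleT i) p.1)
  have hmap : ∀ p ∈ S, (simpleT i p.1, simpleT i p.2) ∈ T := by
    rintro ⟨x, y⟩ hp
    simp only [S, Finset.mem_filter, Finset.mem_univ, true_and] at hp
    obtain ⟨hxy, hw⟩ := hp
    have hne : ¬(x = lo i ∧ y = hi i) := by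
      rintro ⟨rfl, rfl⟩; exact absurd h (not_lt.2 hw.le)
    simp only [T, Finset.mem_filter, Finset.mem_univ, true_and]
    refine ⟨swap_lt hxy hne, ?_⟩
    have s1 : (w * simpleT i) (simpleT i x) = w x := by
      rw [Equiv.Perm.mul_apply, ← Equiv.Perm.mul_apply (simpleT i), sT_sT]; rfl
    have s2 : (w * simpleT i) (simpleT i y) = w y := by
      rw [Equiv.Perm.mul_apply, ← Equiv.Perm.mul_apply (simpleT i), sT_sT]; rfl
    rw [s1, s2]; exact hw
  have hinj : ∀ p ∈ S, ∀ q ∈ S,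
      (simpleT i p.1, simpleT i p.2) = (simpleT i q.1, simpleT i q.2) → p = q := by
    rintro ⟨x, y⟩ _ ⟨x', y'⟩ _ hpq
    simp only [Prod.mk.injEq] at hpq ⊢
    exact ⟨(simpleT i).injective hpq.1, (simpleT i).injective hpq.2⟩
  have himg : S.image (fun p => (simpleT i p.1, simpleT i p.2)) ⊆ T := by
    intro q hq
    obtain ⟨p, hp, rfl⟩ := Finset.mem_image.1 hq
    exact hmap p hp
  have hnotin : (lo i, hi i) ∉ S.image (fun p => (simpleT i p.1, simpleT i p.2)) := by
    intro hmem
    obtain ⟨⟨x, y⟩, hp, heq⟩ := Finset.mem_image.1 hmem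
    simp only [Prod.mk.injEq] at heq
    have hx : x = simpleT i (lo i) := by
      rw [← heq.1, ← Equiv.Perm.mul_apply, sT_sT]; rfl
    have hy : y = simpleT i (hi i) := by
      rw [← heq.2, ← Equiv.Perm.mul_apply, sT_sT]; rfl
    rw [sT_lo] at hx; rw [sT_hi] at hy
    simp only [S, Finset.mem_filter, Finset.mem_univ, true_and] at hp
    subst hx; subst hy
    exact absurd hp.1 (not_lt.2 (by simp [Fin.le_def]))
  have hin : (lo i, hi i) ∈ T := by
    simp only [T, Finset.mem_filter, Finset.mem_univ, true_and]
    refine ⟨by simp [Fin.lt_def], ?_⟩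
    rw [mulsT_lo, mulsT_hi]; exact h
  have hcard : S.card = (S.image (fun p => (simpleT i p.1, simpleT i p.2))).card :=
    (Finset.card_image_of_injOn (fun p hp q hq => hinj p hp q hq)).symm
  have hsub : insert (lo i, hi i) (S.image (fun p => (simpleT i p.1, simpleT i p.2))) ⊆ T := by
    intro q hq
    rcases Finset.mem_insert.1 hq with rfl | hq
    · exact hin
    · exact himg hq
  calc S.card = (S.image _).card := hcard
    _ < (insert (lo i, hi i) (S.image (fun p => (simpleT i p.1, simpleT i p.2)))).card := by
        rw [Finset.card_insert_of_notMem hnotin]; omega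
    _ ≤ T.card := Finset.card_le_card hsub

lemma invc_inv (w : Equiv.Perm (Fin n)) : invc w⁻¹ = invc w := by
  classical
  unfold invc
  apply Finset.card_bij (fun p _ => ((w⁻¹ : Equiv.Perm (Fin n)) p.2, (w⁻¹ : Equiv.Perm (Fin n)) p.1))
  · rintro ⟨x, y⟩ hp
    simp only [Finset.mem_filter, Finset.mem_univ, true_and, Equiv.Perm.coe_inv, Equiv.apply_symm_apply] at hp ⊢
    exact ⟨hp.2, hp.1⟩
  · rintro ⟨x, y⟩ _ ⟨x', y'⟩ _ hxy
    simp only [Prod.mk.injEq] at hxy ⊢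
    exact ⟨(w⁻¹ : Equiv.Perm (Fin n)).injective hxy.2, (w⁻¹ : Equiv.Perm (Fin n)).injective hxy.1⟩
  · rintro ⟨x, y⟩ hq
    simp only [Finset.mem_filter, Finset.mem_univ, true_and] at hq
    refine ⟨(w y, w x), ?_, ?_⟩
    · simp only [Finset.mem_filter, Finset.mem_univ, true_and, Equiv.Perm.coe_inv, Equiv.symm_apply_apply]
      exact ⟨hq.2, hq.1⟩
    · simp

lemma strictMono_eq_one {w : Equiv.Perm (Fin n)} (hsm : StrictMono w) : w = 1 := by
  have h1 : ∀ (f : Equiv.Perm (Fin n)), StrictMono f → ∀ (m : ℕ) (hm : m < n),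
      m ≤ (f ⟨m, hm⟩).1 := by
    intro f hf m
    induction m with
    | zero => intro hm; exact Nat.zero_le _
    | succ k ih =>
      intro hm
      have hk : k < n := by omega
      have h2 : f ⟨k, hk⟩ < f ⟨k+1, hm⟩ := hf (Fin.mk_lt_mk.2 (by omega))
      have h3 := ih hk
      rw [Fin.lt_def] at h2
      omega
  have hle : ∀ (f : Equiv.Perm (Fin n)), StrictMono f → ∀ x : Fin n, x ≤ f x := by
    intro f hf x
    have := h1 f hf x.1 x.2
    rw [Fin.le_def]
    simpa using this
  have hsm' : StrictMono (w⁻¹ : Equiv.Perm (Fin n)) := by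
    intro x y hxy
    rw [← hsm.lt_iff_lt]
    simpa using hxy
  ext x
  have ha := hle w hsm x
  have hb := hle _ hsm' (w x)
  simp only [Equiv.Perm.coe_inv, Equiv.symm_apply_apply] at hb
  have : w x = x := le_antisymm hb ha
  simp [this]


/-- descent -/
def des (w : Equiv.Perm (Fin n)) (i : Fin (n-1)) : Prop := w (hi i) < w (lo i)

lemma lo_lt_hi (i : Fin (n-1)) : lo i < hi i := by simp [Fin.lt_def]

lemma w_lo_ne_hi (w : Equiv.Perm (Fin n)) (i : Fin (n-1)) : w (lo i) ≠ w (hi i) :=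
  fun h => absurd (w.injective h) (Fin.ne_of_lt (lo_lt_hi i))

lemma mul_sT_sT (w : Equiv.Perm (Fin n)) (i : Fin (n-1)) : w * simpleT i * simpleT i = w := by
  rw [mul_assoc, sT_sT, mul_one]

lemma des_invc_lt {w : Equiv.Perm (Fin n)} {i : Fin (n-1)} (h : des w i) :
    invc (w * simpleT i) < invc w := by
  have h2 : (w * simpleT i) (lo i) < (w * simpleT i) (hi i) := by
    rw [mulsT_lo, mulsT_hi]; exact h
  have := invc_lt h2
  rwa [mul_sT_sT] at this

lemma no_des_eq_one {w : Equiv.Perm (Fin n)} (h : ∀ i, ¬ des w i) : w = 1 := by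
  have adj : ∀ (m : ℕ) (h1 : m < n) (h2 : m + 1 < n), w ⟨m, h1⟩ < w ⟨m+1, h2⟩ := by
    intro m h1 h2
    have hm : m < n - 1 := by omega
    have := h ⟨m, hm⟩
    unfold des at this
    have hne : w (lo ⟨m, hm⟩) ≠ w (hi ⟨m, hm⟩) := w_lo_ne_hi w _
    have hlt : w (lo ⟨m, hm⟩) < w (hi ⟨m, hm⟩) := (not_lt.1 this).lt_of_ne hne
    have elo : (lo (⟨m, hm⟩ : Fin (n-1))) = (⟨m, h1⟩ : Fin n) := rfl
    have ehi : (hi (⟨m, hm⟩ : Fin (n-1))) = (⟨m+1, h2⟩ : Fin n) := rfl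
    rwa [elo, ehi] at hlt
  have step : ∀ (k x : ℕ) (hx : x < n) (hy : x + k + 1 < n),
      w ⟨x, hx⟩ < w ⟨x + k + 1, hy⟩ := by
    intro k
    induction k with
    | zero => intro x hx hy; exact adj x hx hy
    | succ m ih =>
      intro x hx hy
      have hmid : x + m + 1 < n := by omega
      have t1 := ih x hx hmid
      have t2 := adj (x + m + 1) hmid (by omega)
      have : (⟨x + m + 1 + 1, by omega⟩ : Fin n) = ⟨x + (m+1) + 1, hy⟩ := by
        simp [Fin.ext_iff]; omega
      rw [this] at t2
      exact t1.trans t2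
  have hsm : StrictMono w := by
    intro x y hxy
    rw [Fin.lt_def] at hxy
    have hy : x.1 + (y.1 - x.1 - 1) + 1 < n := by have := y.2; omega
    have t := step (y.1 - x.1 - 1) x.1 x.2 hy
    have e1 : (⟨x.1, x.2⟩ : Fin n) = x := rfl
    have e2 : (⟨x.1 + (y.1 - x.1 - 1) + 1, hy⟩ : Fin n) = y := by
      simp only [Fin.ext_iff]; omega
    rwa [e1, e2] at t
  exact strictMono_eq_one hsm


/-- the left sorting operator -/
def gop (j : Fin (n-1)) (w : Equiv.Perm (Fin n)) : Equiv.Perm (Fin n) :=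
  if w⁻¹ (lo j) < w⁻¹ (hi j) then simpleT j * w else w

lemma gop_pos {j : Fin (n-1)} {w : Equiv.Perm (Fin n)} (h : w⁻¹ (lo j) < w⁻¹ (hi j)) :
    gop j w = simpleT j * w := by rw [gop]; exact if_pos h

lemma gop_neg {j : Fin (n-1)} {w : Equiv.Perm (Fin n)} (h : ¬ w⁻¹ (lo j) < w⁻¹ (hi j)) :
    gop j w = w := by rw [gop]; exact if_neg h

lemma mulsT_inv_apply (w : Equiv.Perm (Fin n)) (i : Fin (n-1)) (x : Fin n) :
    (w * simpleT i)⁻¹ x = simpleT i (w⁻¹ x) := by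
  rw [mul_inv_rev, sT_inv, Equiv.Perm.mul_apply]

lemma invc_gop_gt {j : Fin (n-1)} {w : Equiv.Perm (Fin n)} (h : w⁻¹ (lo j) < w⁻¹ (hi j)) :
    invc w < invc (simpleT j * w) := by
  have h2 : invc w⁻¹ < invc (w⁻¹ * simpleT j) := invc_lt h
  have e : (simpleT j * w)⁻¹ = w⁻¹ * simpleT j := by rw [mul_inv_rev, sT_inv]
  calc invc w = invc w⁻¹ := (invc_inv w).symm
    _ < invc (w⁻¹ * simpleT j) := h2
    _ = invc ((simpleT j * w)⁻¹) := by rw [e]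
    _ = invc (simpleT j * w) := invc_inv _

lemma invc_gop_ge (j : Fin (n-1)) (w : Equiv.Perm (Fin n)) : invc w ≤ invc (gop j w) := by
  by_cases h : w⁻¹ (lo j) < w⁻¹ (hi j)
  · rw [gop_pos h]; exact (invc_gop_gt h).le
  · rw [gop_neg h]

lemma gop_eq_of_invc {j : Fin (n-1)} {w : Equiv.Perm (Fin n)}
    (h : invc (gop j w) ≤ invc w) : gop j w = w := by
  by_cases hc : w⁻¹ (lo j) < w⁻¹ (hi j)
  · rw [gop_pos hc] at h; exact absurd h (not_le.2 (invc_gop_gt hc))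
  · exact gop_neg hc

lemma invc_fop_ge (i : Fin (n-1)) (w : Equiv.Perm (Fin n)) : invc w ≤ invc (fop i w) := by
  by_cases h : w (lo i) < w (hi i)
  · rw [fop_pos h]; exact (invc_lt h).le
  · rw [fop_neg h]

lemma fop_eq_of_invc {i : Fin (n-1)} {w : Equiv.Perm (Fin n)}
    (h : invc (fop i w) ≤ invc w) : fop i w = w := by
  by_cases hc : w (lo i) < w (hi i)
  · rw [fop_pos hc] at h; exact absurd h (not_le.2 (invc_lt hc))
  · exact fop_neg hc

/-- peel a left descent -/
lemma peel {w : Equiv.Perm (Fin n)} (h : w ≠ 1) :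
    ∃ (j : Fin (n-1)) (w' : Equiv.Perm (Fin n)), w = gop j w' ∧ invc w' < invc w := by
  have hinv : w⁻¹ ≠ 1 := fun hh => h (by rw [← inv_inv w, hh, inv_one])
  have : ¬ (∀ j, ¬ des w⁻¹ j) := fun hh => hinv (no_des_eq_one hh)
  push_neg at this
  obtain ⟨j, hj⟩ := this
  unfold des at hj
  refine ⟨j, simpleT j * w, ?_, ?_⟩
  · have e : (simpleT j * w)⁻¹ = w⁻¹ * simpleT j := by rw [mul_inv_rev, sT_inv]
    have hc : (simpleT j * w)⁻¹ (lo j) < (simpleT j * w)⁻¹ (hi j) := by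
      rw [e, mulsT_lo, mulsT_hi]; exact hj
    rw [gop_pos hc, ← mul_assoc, sT_sT, one_mul]
  · have h2 : (w⁻¹ * simpleT j) (lo j) < (w⁻¹ * simpleT j) (hi j) := by
      rw [mulsT_lo, mulsT_hi]; exact hj
    have h3 := invc_lt h2
    rw [mul_sT_sT] at h3
    calc invc (simpleT j * w) = invc ((simpleT j * w)⁻¹) := (invc_inv _).symm
      _ = invc (w⁻¹ * simpleT j) := by rw [mul_inv_rev, sT_inv]
      _ < invc w⁻¹ := h3
      _ = invc w := invc_inv w

/-- fop and gop commute -/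
lemma fop_gop_comm (i j : Fin (n-1)) (w : Equiv.Perm (Fin n)) :
    fop i (gop j w) = gop j (fop i w) := by
  by_cases hg : w⁻¹ (lo j) < w⁻¹ (hi j)
  · -- g moves
    by_cases haj : w (lo i) = lo j ∧ w (hi i) = hi j
    · -- special aligned case
      obtain ⟨ha, hb⟩ := haj
      have hf : w (lo i) < w (hi i) := by rw [ha, hb]; exact lo_lt_hi j
      have t1 : fop i w = w * simpleT i := fop_pos hf
      have hp : w⁻¹ (lo j) = lo i := by rw [← ha, Equiv.Perm.coe_inv, Equiv.symm_apply_apply]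
      have hq : w⁻¹ (hi j) = hi i := by rw [← hb, Equiv.Perm.coe_inv, Equiv.symm_apply_apply]
      have hcg : ¬ (w * simpleT i)⁻¹ (lo j) < (w * simpleT i)⁻¹ (hi j) := by
        rw [mulsT_inv_apply, mulsT_inv_apply, hp, hq, sT_lo, sT_hi]
        exact (lo_lt_hi i).not_gt
      have t2 : gop j (w * simpleT i) = w * simpleT i := gop_neg hcg
      have hcf : ¬ (simpleT j * w) (lo i) < (simpleT j * w) (hi i) := by
        rw [Equiv.Perm.mul_apply, Equiv.Perm.mul_apply, ha, hb, sT_lo, sT_hi]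
        exact (lo_lt_hi j).not_gt
      have t3 : fop i (simpleT j * w) = simpleT j * w := fop_neg hcf
      have key : simpleT j * w = w * simpleT i := by
        ext x
        rcases eq_or_ne x (lo i) with rfl | hx1
        · rw [Equiv.Perm.mul_apply, Equiv.Perm.mul_apply, ha, sT_lo, sT_lo, hb]
        rcases eq_or_ne x (hi i) with rfl | hx2
        · rw [Equiv.Perm.mul_apply, Equiv.Perm.mul_apply, hb, sT_hi, sT_hi, ha]
        rw [Equiv.Perm.mul_apply, Equiv.Perm.mul_apply, sT_other hx1 hx2, sT_other]
        · rw [← ha]; exact fun hh => hx1 (w.injective hh)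
        · rw [← hb]; exact fun hh => hx2 (w.injective hh)
      rw [gop_pos hg, t1, t2, t3, key]
    · -- generic case
      by_cases hf : w (lo i) < w (hi i)
      · have hnp : ¬ (w⁻¹ (lo j) = lo i ∧ w⁻¹ (hi j) = hi i) := by
          rintro ⟨hp, hq⟩
          exact haj ⟨by rw [← hp, Equiv.Perm.coe_inv, Equiv.apply_symm_apply],
                     by rw [← hq, Equiv.Perm.coe_inv, Equiv.apply_symm_apply]⟩
        have hcg : (w * simpleT i)⁻¹ (lo j) < (w * simpleT i)⁻¹ (hi j) := by
          rw [mulsT_inv_apply, mulsT_inv_apply]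
          exact swap_lt hg hnp
        have hcf : (simpleT j * w) (lo i) < (simpleT j * w) (hi i) := by
          rw [Equiv.Perm.mul_apply, Equiv.Perm.mul_apply]
          exact swap_lt hf haj
        rw [gop_pos hg, fop_pos hf, fop_pos hcf, gop_pos hcg, mul_assoc]
      · have hba : w (hi i) < w (lo i) := (not_lt.1 hf).lt_of_ne (w_lo_ne_hi w i).symm
        have hnba : ¬ (w (hi i) = lo j ∧ w (lo i) = hi j) := by
          rintro ⟨h1, h2⟩
          have hp : w⁻¹ (lo j) = hi i := by rw [← h1, Equiv.Perm.coe_inv, Equiv.symm_apply_apply]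
          have hq : w⁻¹ (hi j) = lo i := by rw [← h2, Equiv.Perm.coe_inv, Equiv.symm_apply_apply]
          rw [hp, hq] at hg
          exact (lo_lt_hi i).not_gt hg
        have hcf : ¬ (simpleT j * w) (lo i) < (simpleT j * w) (hi i) := by
          rw [Equiv.Perm.mul_apply, Equiv.Perm.mul_apply]
          exact (swap_lt hba hnba).not_gt
        rw [gop_pos hg, fop_neg hf, fop_neg hcf, gop_pos hg]
  · -- g fixes w
    by_cases hf : w (lo i) < w (hi i)
    · have hqp : w⁻¹ (hi j) < w⁻¹ (lo j) := by
        have hne : w⁻¹ (lo j) ≠ w⁻¹ (hi j) :=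
          fun hh => absurd (w⁻¹.injective hh) (Fin.ne_of_lt (lo_lt_hi j))
        exact (not_lt.1 hg).lt_of_ne hne.symm
      have hnqp : ¬ (w⁻¹ (hi j) = lo i ∧ w⁻¹ (lo j) = hi i) := by
        rintro ⟨h1, h2⟩
        have ha : w (lo i) = hi j := by rw [← h1, Equiv.Perm.coe_inv, Equiv.apply_symm_apply]
        have hb : w (hi i) = lo j := by rw [← h2, Equiv.Perm.coe_inv, Equiv.apply_symm_apply]
        rw [ha, hb] at hf
        exact (lo_lt_hi j).not_gt hf
      have hcg : ¬ (w * simpleT i)⁻¹ (lo j) < (w * simpleT i)⁻¹ (hi j) := by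
        rw [mulsT_inv_apply, mulsT_inv_apply]
        exact (swap_lt hqp hnqp).not_gt
      rw [gop_neg hg, fop_pos hf, gop_neg hcg]
    · rw [gop_neg hg, fop_neg hf, gop_neg hg]


open Classical in
/-- canonical word: repeatedly remove the least descent -/
noncomputable def canon (w : Equiv.Perm (Fin n)) : List (Fin (n-1)) :=
  if h : ∃ i, des w i then
    have hne : ((Finset.univ : Finset (Fin (n-1))).filter fun i => des w i).Nonempty :=
      ⟨h.choose, by simp [h.choose_spec]⟩
    let m := ((Finset.univ : Finset (Fin (n-1))).filter fun i => des w i).min' hne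
    have hdm : des w m := by
      have := Finset.min'_mem _ hne
      simpa using this
    canon (w * simpleT m) ++ [m]
  else []
termination_by invc w
decreasing_by exact des_invc_lt hdm

lemma canon_none {w : Equiv.Perm (Fin n)} (h : ¬ ∃ i, des w i) : canon w = [] := by
  rw [canon]; exact dif_neg h

lemma canon_one : canon (1 : Equiv.Perm (Fin n)) = [] := by
  apply canon_none
  rintro ⟨i, hi⟩
  unfold des at hi
  simp only [Equiv.Perm.one_apply] at hi
  exact (lo_lt_hi i).not_gt hi

lemma canon_desc {w : Equiv.Perm (Fin n)} {m : Fin (n-1)} (hm : des w m)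
    (hmin : ∀ k, des w k → m ≤ k) : canon w = canon (w * simpleT m) ++ [m] := by
  classical
  have h : ∃ i, des w i := ⟨m, hm⟩
  rw [canon, dif_pos h]
  have hne : ((Finset.univ : Finset (Fin (n-1))).filter fun i => des w i).Nonempty :=
    ⟨h.choose, by simp [h.choose_spec]⟩
  have hmineq : ((Finset.univ : Finset (Fin (n-1))).filter fun i => des w i).min' hne = m := by
    apply le_antisymm
    · exact Finset.min'_le _ _ (by simp [hm])
    · apply Finset.le_min'
      intro y hy
      exact hmin y (by simpa using hy)
  simp only [hmineq]

end JT

namespace JT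
variable {n : ℕ}

/-- word to Hecke element -/
def mkW (l : List (Fin (n-1))) : Hecke n := (heckeCon n).mk' (FreeMonoid.ofList l)

lemma mkW_append (l1 l2 : List (Fin (n-1))) : mkW (l1 ++ l2) = mkW l1 * mkW l2 := by
  unfold mkW
  rw [FreeMonoid.ofList_append, map_mul]

lemma mkW_singleton (i : Fin (n-1)) : mkW [i] = heckeGen n i := rfl

lemma mkW_nil : (mkW [] : Hecke n) = 1 := by
  unfold mkW
  exact map_one _

lemma mk'_rel {x y : FreeMonoid (Fin (n-1))} (h : (x, y) ∈ heckeRels n) :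
    (heckeCon n).mk' x = (heckeCon n).mk' y :=
  Con.eq _ |>.2 (ConGen.Rel.of x y h)

lemma gen_idem (i : Fin (n-1)) : heckeGen n i * heckeGen n i = heckeGen n i := by
  have := mk'_rel (n := n) (Or.inl ⟨i, rfl⟩)
  rw [map_mul] at this
  exact this

lemma gen_comm {i j : Fin (n-1)} (hij : i.1 + 2 ≤ j.1) :
    heckeGen n i * heckeGen n j = heckeGen n j * heckeGen n i := by
  have := mk'_rel (n := n) (Or.inr (Or.inl ⟨i, j, hij, rfl⟩))
  rw [map_mul, map_mul] at this
  exact this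

lemma gen_braid {i j : Fin (n-1)} (hij : j.1 = i.1 + 1) :
    heckeGen n i * heckeGen n j * heckeGen n i = heckeGen n j * heckeGen n i * heckeGen n j := by
  have := mk'_rel (n := n) (Or.inr (Or.inr ⟨i, j, hij, rfl⟩))
  rw [map_mul, map_mul, map_mul, map_mul] at this
  exact this


lemma exch : ∀ (N : ℕ) (w : Equiv.Perm (Fin n)) (d : Fin (n-1)), invc w ≤ N → des w d →
    mkW (canon (w * simpleT d)) * heckeGen n d = mkW (canon w) := by
  intro N
  induction N with
  | zero =>
    intro w d hw hd
    exfalso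
    have h1 : invc (w * simpleT d) < invc w := des_invc_lt hd
    omega
  | succ N IH =>
    intro w d hw hd
    classical
    have hne : ((Finset.univ : Finset (Fin (n-1))).filter fun i => des w i).Nonempty :=
      ⟨d, by simp [hd]⟩
    set m := (((Finset.univ : Finset (Fin (n-1))).filter fun i => des w i).min' hne) with hm_def
    have hm : des w m := by
      have := Finset.min'_mem _ hne
      rw [← hm_def] at this
      simpa using this
    have hmin : ∀ k, des w k → m ≤ k := fun k hk => Finset.min'_le _ _ (by simp [hk])
    have hcw : canon w = canon (w * simpleT m) ++ [m] := canon_desc hm hmin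
    by_cases hdm : d = m
    · subst hdm
      rw [hcw, mkW_append, mkW_singleton]
    · have hmd' : m < d := lt_of_le_of_ne (hmin d hd) (fun h => hdm h.symm)
      have hmd : m.1 < d.1 := hmd'
      have hdn := d.2
      have fixd : ∀ x : Fin n, x.1 < d.1 → simpleT d x = x := fun x hx =>
        sT_other' ⟨by omega, by omega⟩
      have minm' : ∀ k, des (w * simpleT d) k → m ≤ k := by
        intro k hk
        by_contra hc
        push_neg at hc
        have hk1 : k.1 < m.1 := hc
        have hdk : des w k := by
          unfold des at hk ⊢
          rwa [Equiv.Perm.mul_apply, Equiv.Perm.mul_apply,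
            fixd (hi k) (by simp; omega), fixd (lo k) (by simp; omega)] at hk
        exact absurd (hmin k hdk) (not_le.2 hc)
      have hinv2 : invc (w * simpleT m) ≤ N := by
        have := des_invc_lt hm; omega
      by_cases hgap : m.1 + 2 ≤ d.1
      · -- disjoint case
        have fixm : ∀ x : Fin n, m.1 + 1 < x.1 → simpleT m x = x := fun x hx =>
          sT_other' ⟨by omega, by omega⟩
        have desm' : des (w * simpleT d) m := by
          unfold des
          rw [Equiv.Perm.mul_apply, Equiv.Perm.mul_apply,
            fixd (hi m) (by simp; omega), fixd (lo m) (by simp; omega)]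
          exact hm
        have hcw' : canon (w * simpleT d) = canon (w * simpleT d * simpleT m) ++ [m] :=
          canon_desc desm' minm'
        have desd2 : des (w * simpleT m) d := by
          unfold des
          rw [Equiv.Perm.mul_apply, Equiv.Perm.mul_apply,
            fixm (hi d) (by simp; omega), fixm (lo d) (by simp; omega)]
          exact hd
        have IH2 := IH (w * simpleT m) d hinv2 desd2
        have hperm : w * simpleT d * simpleT m = w * simpleT m * simpleT d := by
          rw [mul_assoc, mul_assoc, sT_comm hgap]
        have hcc : heckeGen n m * heckeGen n d = heckeGen n d * heckeGen n m := gen_comm hgap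
        calc mkW (canon (w * simpleT d)) * heckeGen n d
            = mkW (canon (w * simpleT d * simpleT m)) * heckeGen n m * heckeGen n d := by
              rw [hcw', mkW_append, mkW_singleton]
          _ = mkW (canon (w * simpleT m * simpleT d)) * heckeGen n d * heckeGen n m := by
              rw [hperm, mul_assoc, hcc, ← mul_assoc]
          _ = mkW (canon (w * simpleT m)) * heckeGen n m := by rw [IH2]
          _ = mkW (canon w) := by rw [hcw, mkW_append, mkW_singleton]
      · -- adjacent case
        have hadj : d.1 = m.1 + 1 := by omega
        have hP : lo d = hi m := by simp [Fin.ext_iff, hadj]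
        have wlod : w (lo d) = w (hi m) := by rw [hP]
        have eA_lod : ∀ v : Equiv.Perm (Fin n), (v * simpleT m) (lo d) = v (lo m) := by
          intro v; rw [hP, mulsT_hi]
        have eA_hid : ∀ v : Equiv.Perm (Fin n), (v * simpleT m) (hi d) = v (hi d) :=
          fun v => mulsT_other v ⟨by simp; omega, by simp; omega⟩
        have eB_lom : ∀ v : Equiv.Perm (Fin n), (v * simpleT d) (lo m) = v (lo m) :=
          fun v => mulsT_other v ⟨by simp; omega, by simp; omega⟩
        have eB_him : ∀ v : Equiv.Perm (Fin n), (v * simpleT d) (hi m) = v (hi d) := by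
          intro v; rw [← hP, mulsT_lo]
        have hd' : w (hi d) < w (hi m) := by
          have hc := hd
          unfold des at hc
          rwa [wlod] at hc
        -- descents
        have s1 : des (w * simpleT m) d := by
          unfold des
          rw [eA_hid, eA_lod]
          exact hd'.trans hm
        have IH1 := IH (w * simpleT m) d hinv2 s1
        have s2 : des (w * simpleT m * simpleT d) m := by
          unfold des
          rw [eB_him, eB_lom, eA_hid, mulsT_lo]
          exact hd'
        have hinv3 : invc (w * simpleT m * simpleT d) ≤ N := by
          have t1 := des_invc_lt s1
          have t2 := des_invc_lt hm
          omega
        have IH2 := IH (w * simpleT m * simpleT d) m hinv3 s2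
        have ld1 : des (w * simpleT d) m := by
          unfold des
          rw [eB_him, eB_lom]
          exact hd'.trans hm
        have hcwd : canon (w * simpleT d) = canon (w * simpleT d * simpleT m) ++ [m] :=
          canon_desc ld1 minm'
        have ld2 : des (w * simpleT d * simpleT m) d := by
          unfold des
          rw [eA_hid, eA_lod, mulsT_hi, eB_lom, wlod]
          exact hm
        have hinv4 : invc (w * simpleT d * simpleT m) ≤ N := by
          have t1 := des_invc_lt ld1
          have t2 := des_invc_lt hd
          omega
        have IH3 := IH (w * simpleT d * simpleT m) d hinv4 ld2
        have braidperm : w * simpleT d * simpleT m * simpleT d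
            = w * simpleT m * simpleT d * simpleT m := by
          have hb := (sT_braid hadj).symm
          simp only [mul_assoc] at hb ⊢
          rw [hb]
        have hbr : heckeGen n d * (heckeGen n m * heckeGen n d)
            = heckeGen n m * (heckeGen n d * heckeGen n m) := by
          have := gen_braid hadj
          simp only [mul_assoc] at this
          exact this.symm
        calc mkW (canon (w * simpleT d)) * heckeGen n d
            = mkW (canon (w * simpleT d * simpleT m)) * heckeGen n m * heckeGen n d := by
              rw [hcwd, mkW_append, mkW_singleton]
          _ = mkW (canon (w * simpleT d * simpleT m * simpleT d)) * heckeGen n d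
              * heckeGen n m * heckeGen n d := by rw [IH3]
          _ = mkW (canon (w * simpleT m * simpleT d * simpleT m))
              * (heckeGen n d * (heckeGen n m * heckeGen n d)) := by
              rw [braidperm]
              simp only [mul_assoc]
          _ = mkW (canon (w * simpleT m * simpleT d * simpleT m))
              * (heckeGen n m * (heckeGen n d * heckeGen n m)) := by rw [hbr]
          _ = mkW (canon (w * simpleT m * simpleT d)) * heckeGen n d * heckeGen n m := by
              rw [← IH2]
              simp only [mul_assoc]
          _ = mkW (canon (w * simpleT m)) * heckeGen n m := by rw [IH1]
          _ = mkW (canon w) := by rw [hcw, mkW_append, mkW_singleton]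


/-- key step: multiplying a canonical word by a generator -/
lemma lemM (u : Equiv.Perm (Fin n)) (i : Fin (n-1)) :
    mkW (canon u) * heckeGen n i = mkW (canon (fop i u)) := by
  by_cases hc : u (lo i) < u (hi i)
  · rw [fop_pos hc]
    have hdes : des (u * simpleT i) i := by
      unfold des
      rw [mulsT_lo, mulsT_hi]
      exact hc
    have := exch (invc (u * simpleT i)) (u * simpleT i) i le_rfl hdes
    rwa [mul_sT_sT] at this
  · rw [fop_neg hc]
    have hdes : des u i := (not_lt.1 hc).lt_of_ne (w_lo_ne_hi u i).symm
    have he := exch (invc u) u i le_rfl hdes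
    calc mkW (canon u) * heckeGen n i
        = mkW (canon (u * simpleT i)) * (heckeGen n i * heckeGen n i) := by
          rw [← he, mul_assoc]
      _ = mkW (canon (u * simpleT i)) * heckeGen n i := by rw [gen_idem]
      _ = mkW (canon u) := he

/-- apply a word of sorting operators -/
def applyL (l : List (Fin (n-1))) (w : Equiv.Perm (Fin n)) : Equiv.Perm (Fin n) :=
  l.foldl (fun v i => fop i v) w

@[simp] lemma applyL_nil (w : Equiv.Perm (Fin n)) : applyL [] w = w := rfl

lemma applyL_cons (i : Fin (n-1)) (l : List (Fin (n-1))) (w : Equiv.Perm (Fin n)) :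
    applyL (i :: l) w = applyL l (fop i w) := rfl

lemma applyL_concat (l : List (Fin (n-1))) (i : Fin (n-1)) (w : Equiv.Perm (Fin n)) :
    applyL (l ++ [i]) w = fop i (applyL l w) := by
  unfold applyL
  rw [List.foldl_append]
  rfl

/-- every word is congruent to the canonical word of its sorted permutation -/
lemma inj_word (l : List (Fin (n-1))) : mkW l = mkW (canon (applyL l 1)) := by
  induction l using List.reverseRecOn with
  | nil => simp [canon_one]
  | append_singleton l i IHl =>
    rw [mkW_append, mkW_singleton, IHl, applyL_concat, lemM]

/-- the representation of the free monoid -/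
noncomputable def phi : FreeMonoid (Fin (n-1)) →* (Function.End (Equiv.Perm (Fin n)))ᵐᵒᵖ :=
  FreeMonoid.lift (fun i => MulOpposite.op (fop i : Function.End (Equiv.Perm (Fin n))))

lemma phi_ofList (l : List (Fin (n-1))) (w : Equiv.Perm (Fin n)) :
    (phi (FreeMonoid.ofList l)).unop w = applyL l w := by
  induction l generalizing w with
  | nil => rfl
  | cons i l IHl =>
    have : FreeMonoid.ofList (i :: l) = FreeMonoid.of i * FreeMonoid.ofList l := rfl
    rw [this, map_mul]
    show ((phi (FreeMonoid.ofList l)).unop * (phi (FreeMonoid.of i)).unop) w = _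
    have hgen : (phi (FreeMonoid.of i)).unop = (fop i : Function.End (Equiv.Perm (Fin n))) := rfl
    rw [hgen]
    show (phi (FreeMonoid.ofList l)).unop (fop i w) = applyL (i :: l) w
    rw [IHl, applyL_cons]

lemma hecke_le_ker : heckeCon n ≤ Con.ker (phi (n := n)) := by
  apply Con.conGen_le.2
  rintro x y (⟨i, hp⟩ | ⟨i, j, hij, hp⟩ | ⟨i, j, hij, hp⟩) <;>
    rw [Prod.ext_iff] at hp <;>
    obtain ⟨hx, hy⟩ := hp <;>
    subst hx <;> subst hy <;>
    rw [Con.ker_rel] <;>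
    simp only [map_mul] <;>
    apply MulOpposite.unop_injective <;>
    funext w
  · exact fop_fop i w
  · exact (fop_comm hij w).symm
  · exact fop_braid hij w

/-- the representation of the Hecke monoid -/
noncomputable def Phi : Hecke n →* (Function.End (Equiv.Perm (Fin n)))ᵐᵒᵖ :=
  (heckeCon n).lift phi hecke_le_ker

lemma Phi_mkW (l : List (Fin (n-1))) : Phi (mkW l) = phi (FreeMonoid.ofList l) :=
  Con.lift_mk' hecke_le_ker _

/-- well-definedness of the action on congruent words -/
lemma applyL_welldef {l l' : List (Fin (n-1))} (h : (mkW l : Hecke n) = mkW l')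
    (w : Equiv.Perm (Fin n)) : applyL l w = applyL l' w := by
  have := congrArg (Phi (n := n)) h
  rw [Phi_mkW, Phi_mkW] at this
  rw [← phi_ofList, ← phi_ofList, this]

lemma T1 (l : List (Fin (n-1))) (w : Equiv.Perm (Fin n)) : invc w ≤ invc (applyL l w) := by
  induction l generalizing w with
  | nil => simp
  | cons i l IHl =>
    rw [applyL_cons]
    exact (invc_fop_ge i w).trans (IHl (fop i w))

lemma T1eq {l : List (Fin (n-1))} {w : Equiv.Perm (Fin n)}
    (h : invc (applyL l w) ≤ invc w) : applyL l w = w := by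
  induction l generalizing w with
  | nil => simp
  | cons i l IHl =>
    rw [applyL_cons] at h ⊢
    have h1 : invc w ≤ invc (fop i w) := invc_fop_ge i w
    have h2 : invc (fop i w) ≤ invc (applyL l (fop i w)) := T1 l (fop i w)
    have h3 : fop i w = w := fop_eq_of_invc (by omega)
    rw [h3] at h ⊢
    exact IHl h

lemma T2 (l : List (Fin (n-1))) (j : Fin (n-1)) (w : Equiv.Perm (Fin n)) :
    gop j (applyL l w) = applyL l (gop j w) := by
  induction l generalizing w with
  | nil => simp
  | cons i l IHl =>
    rw [applyL_cons, applyL_cons, IHl, fop_gop_comm]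

lemma T3 : ∀ (N : ℕ) (w : Equiv.Perm (Fin n)), invc w ≤ N → ∀ l : List (Fin (n-1)),
    invc (applyL l 1) ≤ invc (applyL l w) ∧
    (invc (applyL l w) ≤ invc (applyL l 1) → applyL l w = applyL l 1) := by
  intro N
  induction N with
  | zero =>
    intro w hw l
    by_cases h1 : w = 1
    · subst h1; exact ⟨le_rfl, fun _ => rfl⟩
    · obtain ⟨j, w', hw', hlt⟩ := peel h1
      omega
  | succ N IH =>
    intro w hw l
    by_cases h1 : w = 1
    · subst h1; exact ⟨le_rfl, fun _ => rfl⟩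
    · obtain ⟨j, w', rfl, hlt⟩ := peel h1
      have hw' : invc w' ≤ N := by omega
      have key : applyL l (gop j w') = gop j (applyL l w') := (T2 l j w').symm
      have hge : invc (applyL l w') ≤ invc (gop j (applyL l w')) := invc_gop_ge _ _
      constructor
      · rw [key]
        exact le_trans (IH w' hw' l).1 hge
      · intro hle
        rw [key] at hle ⊢
        have e1 : gop j (applyL l w') = applyL l w' := by
          apply gop_eq_of_invc
          exact le_trans hle (IH w' hw' l).1
        rw [e1] at hle ⊢
        exact (IH w' hw' l).2 hle

/-- extract a representing word -/
lemma exists_word (x : Hecke n) : ∃ l : List (Fin (n-1)), mkW l = x := by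
  obtain ⟨f, hf⟩ := Con.mk'_surjective (c := heckeCon n) x
  exact ⟨FreeMonoid.toList f, by rw [← hf]; unfold mkW; rw [FreeMonoid.ofList_toList]⟩


lemma applyL_append (l1 l2 : List (Fin (n-1))) (w : Equiv.Perm (Fin n)) :
    applyL (l1 ++ l2) w = applyL l2 (applyL l1 w) := by
  unfold applyL
  rw [List.foldl_append]

end JT


/-- The 0-Hecke monoid is J-trivial. -/
theorem stmt_2 (n : ℕ) (a b : Hecke n)
    (h : {x : Hecke n | ∃ u v, x = u * a * v} = {x : Hecke n | ∃ u v, x = u * b * v}) :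
    a = b := by
  open JT in
  have ha : a ∈ {x : Hecke n | ∃ u v, x = u * a * v} := ⟨1, 1, by rw [one_mul, mul_one]⟩
  rw [h] at ha
  obtain ⟨u, v, hab⟩ := ha
  have hb : b ∈ {x : Hecke n | ∃ u v, x = u * b * v} := ⟨1, 1, by rw [one_mul, mul_one]⟩
  rw [← h] at hb
  obtain ⟨u', v', hba⟩ := hb
  obtain ⟨la, hla⟩ := JT.exists_word a
  obtain ⟨lb, hlb⟩ := JT.exists_word b
  obtain ⟨lu, hlu⟩ := JT.exists_word u
  obtain ⟨lv, hlv⟩ := JT.exists_word v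
  obtain ⟨lu', hlu'⟩ := JT.exists_word u'
  obtain ⟨lv', hlv'⟩ := JT.exists_word v'
  have h1 : (JT.mkW la : Hecke n) = JT.mkW (lu ++ lb ++ lv) := by
    rw [JT.mkW_append, JT.mkW_append, hla, hlu, hlb, hlv]; exact hab
  have h2 : (JT.mkW lb : Hecke n) = JT.mkW (lu' ++ la ++ lv') := by
    rw [JT.mkW_append, JT.mkW_append, hlb, hlu', hla, hlv']; exact hba
  set α := JT.applyL la (1 : Equiv.Perm (Fin n)) with hα
  set β := JT.applyL lb (1 : Equiv.Perm (Fin n)) with hβ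
  set p := JT.applyL lu (1 : Equiv.Perm (Fin n)) with hp
  set q := JT.applyL lb p with hq
  have e1 : α = JT.applyL lv q := by
    rw [hα, JT.applyL_welldef h1 1, JT.applyL_append, JT.applyL_append]
  set p' := JT.applyL lu' (1 : Equiv.Perm (Fin n)) with hp'
  set q' := JT.applyL la p' with hq'
  have e2 : β = JT.applyL lv' q' := by
    rw [hβ, JT.applyL_welldef h2 1, JT.applyL_append, JT.applyL_append]
  -- inequalities
  have i1 : JT.invc β ≤ JT.invc q := (JT.T3 (JT.invc p) p le_rfl lb).1
  have i2 : JT.invc q ≤ JT.invc α := by rw [e1]; exact JT.T1 lv q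
  have i3 : JT.invc α ≤ JT.invc q' := (JT.T3 (JT.invc p') p' le_rfl la).1
  have i4 : JT.invc q' ≤ JT.invc β := by rw [e2]; exact JT.T1 lv' q'
  -- hence all equal
  have hαβ : JT.invc α = JT.invc β := by omega
  have s1 : JT.applyL lv q = q := JT.T1eq (by rw [← e1]; exact le_trans (le_of_eq hαβ) i1)
  have s2 : q = β := (JT.T3 (JT.invc p) p le_rfl lb).2 (hαβ ▸ i2)
  have hfinal : α = β := by rw [e1, s1, s2]
  calc a = JT.mkW la := hla.symm
    _ = JT.mkW (JT.canon α) := JT.inj_word la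
    _ = JT.mkW (JT.canon β) := by rw [hfinal]
    _ = JT.mkW lb := (JT.inj_word lb).symm
    _ = b := hlb
end

section
/- The set CB_n of convex binary relations on {1,...,n} is a submonoid of the monoid B_n of binary relations under relational composition, and it is closed under taking transpose (converse relation). -/
open Pointwise

lemma convex_mul {n : ℕ} {r s : BRel n} (hr : IsConvexRel r) (hs : IsConvexRel s) :
    IsConvexRel (r * s) := by
  obtain ⟨hr0, hr1, hr2⟩ := hr
  obtain ⟨hs0, hs1, hs2⟩ := hs
  refine ⟨fun i => ⟨i, hr0 i, hs0 i⟩, fun j a b c hab hbc ha hc => ?_,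
    fun j a b c hab hbc ha hc => ?_⟩
  · obtain ⟨ka, hka1, hka2⟩ := ha
    obtain ⟨kc, hkc1, hkc2⟩ := hc
    by_cases h1 : b ≤ ka
    · exact ⟨ka, hr1 ka hab h1 hka1 (hr0 ka), hka2⟩
    by_cases h2 : kc ≤ b
    · exact ⟨kc, hr1 kc h2 hbc (hr0 kc) hkc1, hkc2⟩
    · push_neg at h1 h2
      exact ⟨b, hr0 b, hs1 j h1.le h2.le hka2 hkc2⟩
  · obtain ⟨ka, hka1, hka2⟩ := ha
    obtain ⟨kc, hkc1, hkc2⟩ := hc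
    by_cases h1 : b ≤ ka
    · exact ⟨ka, hka1, hs2 ka hab h1 hka2 (hs0 ka)⟩
    by_cases h2 : kc ≤ b
    · exact ⟨kc, hkc1, hs2 kc h2 hbc (hs0 kc) hkc2⟩
    · push_neg at h1 h2
      exact ⟨b, hr2 j h1.le h2.le hka1 hkc1, hs0 b⟩

/-- The convex binary relations form a submonoid of `B_n` closed
under transpose. -/
theorem stmt_3 (n : ℕ) :
    (∃ CB : Submonoid (BRel n), (CB : Set (BRel n)) = {ξ | IsConvexRel ξ}) ∧
    (∀ ξ : BRel n, IsConvexRel ξ → IsConvexRel fun i j => ξ j i) := by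
  constructor
  · refine ⟨⟨⟨{ξ | IsConvexRel ξ}, fun ha hb => convex_mul ha hb⟩, ?_⟩, rfl⟩
    refine ⟨fun i => rfl, fun j a b c hab hbc ha hc => ?_,
      fun j a b c hab hbc ha hc => ?_⟩ <;>
    · simp only [Set.mem_setOf_eq, BRel.one_def] at *
      omega
  · rintro ξ ⟨h0, h1, h2⟩
    exact ⟨h0, h2, h1⟩
end

section
/- The map Θ sending a convex binary relation ξ on {1,...,n} to the pair (max(ξ), min(ξ)) is an isomorphism of ordered monoids from the monoid CB_n of convex binary relations (ordered by inclusion) onto the product C_n^+ × C_n^- of the monoid of order-preserving non-decreasing transformations with the monoid of order-preserving non-increasing transformations of {1,...,n} (with the pointwise and opposite-pointwise orders respectively). -/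
open Pointwise

section Stmt4Aux

open Classical

variable {n : ℕ}

/-- The convex relation with column intervals `[g j, f j]`. -/
def relOf (f g : Fin n → Fin n) : BRel n := fun i j => g j ≤ i ∧ i ≤ f j

lemma le_maxF (ξ : BRel n) (j : Fin n) : j ≤ maxF ξ j := by
  unfold maxF
  exact Finset.le_max' _ _ (Finset.mem_insert_self _ _)

lemma minF_le (ξ : BRel n) (j : Fin n) : minF ξ j ≤ j := by
  unfold minF
  exact Finset.min'_le _ _ (Finset.mem_insert_self _ _)

lemma le_maxF_of {ξ : BRel n} {i j : Fin n} (h : ξ i j) : i ≤ maxF ξ j := by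
  have hm : i ∈ insert j (Finset.univ.filter fun i => ξ i j) :=
    Finset.mem_insert_of_mem (Finset.mem_filter.2 ⟨Finset.mem_univ _, h⟩)
  unfold maxF
  exact Finset.le_max' _ _ hm

lemma minF_le_of {ξ : BRel n} {i j : Fin n} (h : ξ i j) : minF ξ j ≤ i := by
  have hm : i ∈ insert j (Finset.univ.filter fun i => ξ i j) :=
    Finset.mem_insert_of_mem (Finset.mem_filter.2 ⟨Finset.mem_univ _, h⟩)
  unfold minF
  exact Finset.min'_le _ _ hm

lemma maxF_spec {ξ : BRel n} (hrefl : ∀ i, ξ i i) (j : Fin n) : ξ (maxF ξ j) j := by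
  have h : maxF ξ j ∈ insert j (Finset.univ.filter fun i => ξ i j) :=
    Finset.max'_mem _ _
  rw [Finset.mem_insert, Finset.mem_filter] at h
  rcases h with h | h
  · rw [h]; exact hrefl j
  · exact h.2

lemma minF_spec {ξ : BRel n} (hrefl : ∀ i, ξ i i) (j : Fin n) : ξ (minF ξ j) j := by
  have h : minF ξ j ∈ insert j (Finset.univ.filter fun i => ξ i j) :=
    Finset.min'_mem _ _
  rw [Finset.mem_insert, Finset.mem_filter] at h
  rcases h with h | h
  · rw [h]; exact hrefl j
  · exact h.2

lemma convex_char {ξ : BRel n} (hc : IsConvexRel ξ) (i j : Fin n) :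
    ξ i j ↔ minF ξ j ≤ i ∧ i ≤ maxF ξ j := by
  constructor
  · exact fun h => ⟨minF_le_of h, le_maxF_of h⟩
  · rintro ⟨h1, h2⟩
    exact hc.2.1 j h1 h2 (minF_spec hc.1 j) (maxF_spec hc.1 j)

lemma eq_relOf {ξ : BRel n} (hc : IsConvexRel ξ) : ξ = relOf (maxF ξ) (minF ξ) := by
  funext i j
  exact propext (convex_char hc i j)

lemma maxF_mono {ξ : BRel n} (hc : IsConvexRel ξ) : Monotone (maxF ξ) := by
  intro j j' hjj
  by_cases h : maxF ξ j ≤ j'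
  · exact h.trans (le_maxF ξ j')
  · push_neg at h
    exact le_maxF_of (hc.2.2 (maxF ξ j) hjj h.le (maxF_spec hc.1 j) (hc.1 _))

lemma minF_mono {ξ : BRel n} (hc : IsConvexRel ξ) : Monotone (minF ξ) := by
  intro j j' hjj
  by_cases h : j ≤ minF ξ j'
  · exact (minF_le ξ j).trans h
  · push_neg at h
    exact minF_le_of (hc.2.2 (minF ξ j') h.le hjj (hc.1 _) (minF_spec hc.1 j'))

lemma relOf_convex {f g : Fin n → Fin n} (hfm : Monotone f) (hf : ∀ i, i ≤ f i)
    (hgm : Monotone g) (hg : ∀ i, g i ≤ i) : IsConvexRel (relOf f g) := by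
  refine ⟨fun i => ⟨hg i, hf i⟩, fun j a b c hab hbc ha hc => ?_, 
    fun j a b c hab hbc ha hc => ?_⟩
  · exact ⟨ha.1.trans hab, hbc.trans hc.2⟩
  · exact ⟨(hgm hbc).trans hc.1, ha.2.trans (hfm hab)⟩

lemma maxF_relOf {f g : Fin n → Fin n} (hf : ∀ i, i ≤ f i) (hg : ∀ i, g i ≤ i)
    (j : Fin n) : maxF (relOf f g) j = f j := by
  have hrefl : ∀ i, relOf f g i i := fun i => ⟨hg i, hf i⟩
  refine le_antisymm (maxF_spec hrefl j).2 (le_maxF_of ⟨(hg j).trans (hf j), le_rfl⟩)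

lemma minF_relOf {f g : Fin n → Fin n} (hf : ∀ i, i ≤ f i) (hg : ∀ i, g i ≤ i)
    (j : Fin n) : minF (relOf f g) j = g j := by
  have hrefl : ∀ i, relOf f g i i := fun i => ⟨hg i, hf i⟩
  refine le_antisymm (minF_le_of ⟨le_rfl, (hg j).trans (hf j)⟩) (minF_spec hrefl j).1

lemma one_eq_relOf : (1 : BRel n) = relOf id id := by
  funext i j
  apply propext
  rw [BRel.one_def]
  constructor
  · rintro rfl; exact ⟨le_rfl, le_rfl⟩
  · rintro ⟨h1, h2⟩; exact le_antisymm h2 h1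

lemma relOf_mul {f g f' g' : Fin n → Fin n}
    (hfm : Monotone f) (hf : ∀ i, i ≤ f i) (hgm : Monotone g) (hg : ∀ i, g i ≤ i)
    (hf' : ∀ i, i ≤ f' i) (hg' : ∀ i, g' i ≤ i) :
    relOf f g * relOf f' g' = relOf (f ∘ f') (g ∘ g') := by
  funext i j
  apply propext
  rw [BRel.mul_def]
  constructor
  · rintro ⟨k, ⟨h1, h2⟩, h3, h4⟩
    exact ⟨(hgm h3).trans h1, h2.trans (hfm h4)⟩
  · rintro ⟨h1, h2⟩
    -- find k ∈ [g' j, f' j] with g k ≤ i ≤ f k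
    have hne : ((Finset.Icc (g' j) (f' j)).filter fun k => i ≤ f k).Nonempty := by
      refine ⟨f' j, Finset.mem_filter.2 ⟨Finset.mem_Icc.2 ⟨(hg' j).trans (hf' j), le_rfl⟩, h2⟩⟩
    set k₀ := ((Finset.Icc (g' j) (f' j)).filter fun k => i ≤ f k).min' hne with hk₀
    have hk₀mem := Finset.min'_mem _ hne
    rw [Finset.mem_filter, Finset.mem_Icc] at hk₀mem
    obtain ⟨⟨hk1, hk2⟩, hk3⟩ := hk₀mem
    refine ⟨k₀, ⟨?_, hk3⟩, hk1, hk2⟩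
    by_cases hc : k₀ ≤ g' j
    · exact (hgm hc).trans h1
    · push_neg at hc
      have hk0pos : 1 ≤ k₀.1 := by
        have := hc
        rw [Fin.lt_def] at this
        omega
      set k₁ : Fin n := ⟨k₀.1 - 1, by omega⟩ with hk₁
      have hk₁lt : k₁ < k₀ := by
        rw [Fin.lt_def]
        show k₀.1 - 1 < k₀.1
        omega
      have hk₁mem : k₁ ∈ Finset.Icc (g' j) (f' j) := by
        rw [Finset.mem_Icc]
        constructor
        · rw [Fin.le_def]
          rw [Fin.lt_def] at hc
          show (g' j).1 ≤ k₀.1 - 1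
          omega
        · exact hk₁lt.le.trans hk2
      have hnot : ¬ i ≤ f k₁ := by
        intro habs
        have hkm : k₁ ∈ (Finset.Icc (g' j) (f' j)).filter fun k => i ≤ f k :=
          Finset.mem_filter.2 ⟨hk₁mem, habs⟩
        have : k₀ ≤ k₁ := Finset.min'_le _ _ hkm
        exact absurd hk₁lt (not_lt.2 this)
      push_neg at hnot
      have : k₁ < i := lt_of_le_of_lt (hf k₁) hnot
      have hk0i : k₀ ≤ i := by
        rw [Fin.le_def]
        rw [Fin.lt_def] at this
        have h2 : k₀.1 - 1 < i.1 := this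
        omega
      exact (hg k₀).trans hk0i

/-- The submonoid of convex binary relations. -/
def CBmon (n : ℕ) : Submonoid (BRel n) where
  carrier := {ξ | IsConvexRel ξ}
  one_mem' := by
    rw [Set.mem_setOf_eq, one_eq_relOf]
    exact relOf_convex monotone_id (fun _ => le_rfl) monotone_id (fun _ => le_rfl)
  mul_mem' := by
    intro ξ η hξ hη
    rw [Set.mem_setOf_eq] at *
    rw [eq_relOf hξ, eq_relOf hη,
      relOf_mul (maxF_mono hξ) (le_maxF ξ) (minF_mono hξ) (minF_le ξ)
        (le_maxF η) (minF_le η)]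
    exact relOf_convex ((maxF_mono hξ).comp (maxF_mono hη))
      (fun i => (le_maxF η i).trans (le_maxF ξ _))
      ((minF_mono hξ).comp (minF_mono hη))
      (fun i => (minF_le ξ _).trans (minF_le η i))

lemma mul_eq_relOf {ξ η : BRel n} (hξ : IsConvexRel ξ) (hη : IsConvexRel η) :
    ξ * η = relOf (maxF ξ ∘ maxF η) (minF ξ ∘ minF η) := by
  conv_lhs => rw [eq_relOf hξ, eq_relOf hη]
  exact relOf_mul (maxF_mono hξ) (le_maxF ξ) (minF_mono hξ) (minF_le ξ)
    (le_maxF η) (minF_le η)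

lemma maxF_mul {ξ η : BRel n} (hξ : IsConvexRel ξ) (hη : IsConvexRel η) :
    maxF (ξ * η) = maxF ξ ∘ maxF η := by
  rw [mul_eq_relOf hξ hη]
  funext j
  exact maxF_relOf (fun i => (le_maxF η i).trans (le_maxF ξ _))
    (fun i => (minF_le ξ _).trans (minF_le η i)) j

lemma minF_mul {ξ η : BRel n} (hξ : IsConvexRel ξ) (hη : IsConvexRel η) :
    minF (ξ * η) = minF ξ ∘ minF η := by
  rw [mul_eq_relOf hξ hη]
  funext j
  exact minF_relOf (fun i => (le_maxF η i).trans (le_maxF ξ _))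
    (fun i => (minF_le ξ _).trans (minF_le η i)) j

end Stmt4Aux

/-- `Θ : ξ ↦ (max(ξ), min(ξ))` is an isomorphism of ordered monoids
from the monoid `CB_n` of convex binary relations (ordered by inclusion) onto
`C_n^+ × C_n^-` (pointwise and opposite-pointwise orders). -/
theorem stmt_4 (n : ℕ) :
    ∃ CB : Submonoid (BRel n), (CB : Set (BRel n)) = {ξ | IsConvexRel ξ} ∧
      ∃ Θ : CB ≃* (Cplus n × Cminus n),
        (∀ ξ : CB, ((Θ ξ).1 : Function.End (Fin n)) = maxF ξ.1 ∧
                   ((Θ ξ).2 : Function.End (Fin n)) = minF ξ.1) ∧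
        (∀ ξ η : CB, (∀ i j, ξ.1 i j → η.1 i j) ↔
          ((∀ j, ((Θ ξ).1 : Function.End (Fin n)) j ≤ ((Θ η).1 : Function.End (Fin n)) j) ∧
           (∀ j, ((Θ η).2 : Function.End (Fin n)) j ≤ ((Θ ξ).2 : Function.End (Fin n)) j))) := by
  classical
  refine ⟨CBmon n, rfl, ?_⟩
  refine ⟨{ toFun := fun ξ =>
              (⟨maxF ξ.1, maxF_mono ξ.2, le_maxF ξ.1⟩,
               ⟨minF ξ.1, minF_mono ξ.2, minF_le ξ.1⟩),
            invFun := fun p =>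
              ⟨relOf p.1.1 p.2.1, relOf_convex p.1.2.1 p.1.2.2 p.2.2.1 p.2.2.2⟩,
            left_inv := fun ξ => Subtype.ext (eq_relOf ξ.2).symm,
            right_inv := fun p => by
              refine Prod.ext (Subtype.ext ?_) (Subtype.ext ?_)
              · exact funext fun j => maxF_relOf p.1.2.2 p.2.2.2 j
              · exact funext fun j => minF_relOf p.1.2.2 p.2.2.2 j,
            map_mul' := fun ξ η => by
              refine Prod.ext (Subtype.ext ?_) (Subtype.ext ?_)
              · exact maxF_mul ξ.2 η.2
              · exact minF_mul ξ.2 η.2 }, fun ξ => ⟨rfl, rfl⟩, ?_⟩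
  intro ξ η
  have hξ : IsConvexRel ξ.1 := ξ.2
  have hη : IsConvexRel η.1 := η.2
  constructor
  · intro h
    constructor
    · intro j
      exact le_maxF_of (h _ _ (maxF_spec hξ.1 j))
    · intro j
      exact minF_le_of (h _ _ (minF_spec hξ.1 j))
  · rintro ⟨h1, h2⟩ i j hij
    obtain ⟨ha, hb⟩ := (convex_char hξ i j).1 hij
    exact (convex_char hη i j).2 ⟨(h2 j).trans ha, hb.trans (h1 j)⟩
end

section
/- The elements ε_i = Φ(id) + Φ(s_i) of the monoid of n×n Boolean matrices (where Φ embeds S_n as permutation matrices, sum is entrywise Boolean OR) satisfy ε_i² = ε_i, ε_i ε_j = ε_j ε_i for |i−j| ≥ 2, and ε_i ε_{i+1} ε_i = ε_{i+1} ε_i ε_{i+1}; consequently there is a unique surjective monoid homomorphism Ψ from the 0-Hecke monoid H_n onto the double Catalan monoid DC_n = ⟨ε_1,...,ε_{n-1}⟩ with Ψ(e_i) = ε_i. -/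
open Pointwise

section Aux

variable {n : ℕ}

lemma simpleT_simpleT (i : Fin (n - 1)) (a : Fin n) : simpleT i (simpleT i a) = a :=
  Equiv.swap_apply_self _ _ _

lemma simpleT_eq_iff {i : Fin (n - 1)} {a x : Fin n} :
    simpleT i a = x ↔ a = simpleT i x := by
  constructor
  · rintro rfl; exact (simpleT_simpleT i a).symm
  · rintro rfl; exact simpleT_simpleT i x

lemma eps_mul (i : Fin (n - 1)) (ξ : BRel n) (a b : Fin n) :
    (eps i * ξ) a b ↔ ξ a b ∨ ξ (simpleT i a) b := by
  rw [BRel.mul_def]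
  constructor
  · rintro ⟨k, (rfl | hk), h⟩
    · exact Or.inl h
    · right; rwa [hk, simpleT_simpleT]
  · rintro (h | h)
    · exact ⟨a, Or.inl rfl, h⟩
    · exact ⟨simpleT i a, Or.inr (simpleT_simpleT i a).symm, h⟩

lemma simpleT_val (i : Fin (n - 1)) (a : Fin n) :
    (simpleT i a).1 = if a.1 = i.1 then i.1 + 1 else if a.1 = i.1 + 1 then i.1 else a.1 := by
  rw [simpleT, Equiv.swap_apply_def]
  split_ifs <;> simp_all [Fin.ext_iff]

lemma simpleT_comm {i j : Fin (n - 1)} (h : i.1 + 2 ≤ j.1) (a : Fin n) :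
    simpleT i (simpleT j a) = simpleT j (simpleT i a) := by
  have hi := i.2; have hj := j.2; have ha := a.2
  apply Fin.ext
  simp only [simpleT_val]
  split_ifs <;> omega

set_option maxHeartbeats 1600000 in
lemma simpleT_braid {i j : Fin (n - 1)} (h : j.1 = i.1 + 1) (a : Fin n) :
    simpleT i (simpleT j (simpleT i a)) = simpleT j (simpleT i (simpleT j a)) := by
  have hi := i.2; have hj := j.2; have ha := a.2
  apply Fin.ext
  simp only [simpleT_val]
  split_ifs <;> omega

lemma eps_idem (i : Fin (n - 1)) : eps (n := n) i * eps i = eps i := by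
  funext a b
  apply propext
  simp only [eps_mul, eps, simpleT_eq_iff, simpleT_simpleT]
  tauto

lemma eps_comm {i j : Fin (n - 1)} (h : i.1 + 2 ≤ j.1) :
    eps (n := n) i * eps j = eps j * eps i := by
  funext a b
  apply propext
  simp only [eps_mul, eps, simpleT_eq_iff, simpleT_simpleT, simpleT_comm h]
  tauto

lemma eps_braid {i j : Fin (n - 1)} (h : j.1 = i.1 + 1) :
    eps (n := n) i * eps j * eps i = eps j * eps i * eps j := by
  rw [mul_assoc, mul_assoc]
  funext a b
  apply propext
  simp only [eps_mul, eps, simpleT_eq_iff, simpleT_simpleT, simpleT_braid h]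
  tauto

end Aux

/-- The `ε_i` satisfy the 0-Hecke relations, and consequently there is a
unique (surjective) monoid homomorphism `Ψ : H_n → DC_n` with `Ψ(e_i) = ε_i`. -/
theorem stmt_5 (n : ℕ) :
    (∀ i : Fin (n - 1), eps (n := n) i * eps i = eps i) ∧
    (∀ i j : Fin (n - 1), (i.1 + 2 ≤ j.1 ∨ j.1 + 2 ≤ i.1) →
      eps (n := n) i * eps j = eps j * eps i) ∧
    (∀ i j : Fin (n - 1), j.1 = i.1 + 1 →
      eps (n := n) i * eps j * eps i = eps j * eps i * eps j) ∧
    ∃ Ψ : Hecke n →* DC n,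
      (∀ i, Ψ (heckeGen n i) = ⟨eps i, Submonoid.subset_closure (Set.mem_range_self i)⟩) ∧
      Function.Surjective Ψ ∧
      ∀ Ψ' : Hecke n →* DC n,
        (∀ i, Ψ' (heckeGen n i) = ⟨eps i, Submonoid.subset_closure (Set.mem_range_self i)⟩) →
          Ψ' = Ψ := by
  refine ⟨eps_idem, ?_, fun i j h => eps_braid h, ?_⟩
  · rintro i j (h | h)
    · exact eps_comm h
    · exact (eps_comm h).symm
  · set f : FreeMonoid (Fin (n - 1)) →* DC n :=
      FreeMonoid.lift
        (fun i => ⟨eps i, Submonoid.subset_closure (Set.mem_range_self i)⟩) with hf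
    have hker : heckeCon n ≤ Con.ker f := by
      rw [heckeCon]
      apply Con.conGen_le.2
      rintro a b (⟨i, hab⟩ | ⟨i, j, hij, hab⟩ | ⟨i, j, hij, hab⟩) <;>
          rw [Prod.ext_iff] at hab <;> obtain ⟨ha, hb⟩ := hab <;> subst ha <;> subst hb <;>
          refine (Con.ker_rel f).2 (Subtype.ext ?_) <;>
          simp only [map_mul, hf, FreeMonoid.lift_eval_of, Submonoid.coe_mul]
      · exact eps_idem i
      · exact eps_comm hij
      · exact eps_braid hij
    have hgen : ∀ i, ((heckeCon n).lift f hker) (heckeGen n i) =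
        ⟨eps i, Submonoid.subset_closure (Set.mem_range_self i)⟩ := by
      intro i
      rw [heckeGen, Con.lift_mk']
      exact Subtype.ext (by simp [hf])
    refine ⟨(heckeCon n).lift f hker, hgen, ?_, ?_⟩
    · rintro ⟨x, hx⟩
      have : ∃ y : Hecke n, (((heckeCon n).lift f hker) y : BRel n) = x := by
        refine Submonoid.closure_induction
          (motive := fun x _ => ∃ y : Hecke n, (((heckeCon n).lift f hker) y : BRel n) = x)
          ?_ ?_ ?_ hx
        · rintro x ⟨i, rfl⟩
          exact ⟨heckeGen n i, by rw [hgen i]⟩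
        · exact ⟨1, by simp⟩
        · rintro x y hxm hym ⟨a, ha⟩ ⟨b, hb⟩
          exact ⟨a * b, by simp [map_mul, ha, hb]⟩
      obtain ⟨y, hy⟩ := this
      exact ⟨y, Subtype.ext hy⟩
    · intro Ψ' hΨ'
      apply MonoidHom.ext; intro x
      obtain ⟨w, rfl⟩ := (heckeCon n).mk'_surjective x
      induction w using FreeMonoid.recOn with
      | one => rw [map_one, map_one, map_one]
      | of_mul i w ihw =>
        rw [show (heckeCon n).mk' (FreeMonoid.of i * w) =
              heckeGen n i * (heckeCon n).mk' w from map_mul _ _ _,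
          map_mul, map_mul, ihw, hΨ' i, hgen i]
end

section
/- For every permutation w ∈ S_n, the Boolean matrix Ψ(z_w) representing the image of w in the double Catalan monoid satisfies max(Ψ(z_w)) = α_w and min(Ψ(z_w)) = β_w, where α_w(i) = max{w(j) : j ≤ i} is the left-to-right maximum function and β_w(i) = min{w(j) : j ≥ i} is the right-to-left minimum function. Explicitly, the (i,j)-entry of Ψ(z_w) is 1 if and only if β_w(j) ≤ i ≤ α_w(j). -/
open Pointwise

section helpers
variable {n : ℕ}

def fi0 (i : Fin (n-1)) : Fin n := ⟨i.1, by have := i.2; omega⟩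
def fi1 (i : Fin (n-1)) : Fin n := ⟨i.1+1, by have := i.2; omega⟩

lemma simpleT_def (i : Fin (n-1)) : simpleT i = Equiv.swap (fi0 i) (fi1 i) := rfl

lemma fi0_lt_fi1 (i : Fin (n-1)) : fi0 i < fi1 i := by simp [fi0, fi1, Fin.lt_def]

lemma fi0_ne_fi1 (i : Fin (n-1)) : fi0 i ≠ fi1 i := (fi0_lt_fi1 i).ne

lemma simpleT_fi0 (i : Fin (n-1)) : simpleT i (fi0 i) = fi1 i := Equiv.swap_apply_left _ _
lemma simpleT_fi1 (i : Fin (n-1)) : simpleT i (fi1 i) = fi0 i := Equiv.swap_apply_right _ _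
lemma simpleT_ne (i : Fin (n-1)) {a : Fin n} (h0 : a ≠ fi0 i) (h1 : a ≠ fi1 i) :
    simpleT i a = a := Equiv.swap_apply_of_ne_of_ne h0 h1
lemma simpleT_invol (i : Fin (n-1)) (a : Fin n) : simpleT i (simpleT i a) = a :=
  Equiv.swap_apply_self _ _ _
lemma simpleT_mul_self (i : Fin (n-1)) : simpleT i * simpleT i = 1 :=
  Equiv.swap_mul_self _ _

lemma swap_lt_swap (i : Fin (n-1)) {a b : Fin n} (hab : a < b)
    (h : ¬(a = fi0 i ∧ b = fi1 i)) : simpleT i a < simpleT i b := by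
  simp only [simpleT_def, Equiv.swap_apply_def]
  split_ifs <;>
    (try exact hab) <;>
    (simp only [Fin.lt_def, Fin.ext_iff, fi0, fi1, not_and] at *) <;> omega

lemma simpleT_Iic (i : Fin (n-1)) {b : Fin n} (hb : b ≠ fi0 i) {k : Fin n} (hk : k ≤ b) :
    simpleT i k ≤ b := by
  simp only [simpleT_def, Equiv.swap_apply_def]
  split_ifs <;>
    (try exact hk) <;>
    (simp only [Fin.le_def, Fin.ext_iff, fi0, fi1, ne_eq, not_and] at *) <;> omega

lemma simpleT_Ici (i : Fin (n-1)) {b : Fin n} (hb : b ≠ fi1 i) {k : Fin n} (hk : b ≤ k) :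
    b ≤ simpleT i k := by
  simp only [simpleT_def, Equiv.swap_apply_def]
  split_ifs <;>
    (try exact hk) <;>
    (simp only [Fin.le_def, Fin.ext_iff, fi0, fi1, ne_eq, not_and] at *) <;> omega

lemma aux_card_Iic {j m : Fin n} (f : Fin n → Fin n) (hinj : Function.Injective f)
    (h : ∀ k, k ≤ j → f k ≤ m) : j ≤ m := by
  have h1 : (Finset.Iic j).image f ⊆ Finset.Iic m := by
    intro x hx
    obtain ⟨k, hk, rfl⟩ := Finset.mem_image.1 hx
    exact Finset.mem_Iic.2 (h k (Finset.mem_Iic.1 hk))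
  have h2 := Finset.card_le_card h1
  rw [Finset.card_image_of_injective _ hinj, Fin.card_Iic, Fin.card_Iic] at h2
  exact Fin.le_def.2 (by omega)

lemma aux_card_Ici {j m : Fin n} (f : Fin n → Fin n) (hinj : Function.Injective f)
    (h : ∀ k, j ≤ k → m ≤ f k) : m ≤ j := by
  have h1 : (Finset.Ici j).image f ⊆ Finset.Ici m := by
    intro x hx
    obtain ⟨k, hk, rfl⟩ := Finset.mem_image.1 hx
    exact Finset.mem_Ici.2 (h k (Finset.mem_Ici.1 hk))
  have h2 := Finset.card_le_card h1
  rw [Finset.card_image_of_injective _ hinj, Fin.card_Ici, Fin.card_Ici] at h2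
  have := j.2; have := m.2
  exact Fin.le_def.2 (by omega)

lemma strictMono_le_apply {f : Fin n → Fin n} (h : StrictMono f) (a : Fin n) : a ≤ f a :=
  aux_card_Iic f h.injective (fun k hk => h.le_iff_le.2 hk)

lemma strictMono_eq_one {w : Equiv.Perm (Fin n)} (h : StrictMono (w : Fin n → Fin n)) :
    w = 1 := by
  have hinv : StrictMono ((w⁻¹ : Equiv.Perm (Fin n)) : Fin n → Fin n) := by
    intro a b hab
    have : w (w⁻¹ a) < w (w⁻¹ b) := by simpa using hab
    exact h.lt_iff_lt.1 this
  ext a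
  have h1 := strictMono_le_apply h a
  have h2 := strictMono_le_apply hinv (w a)
  simp only [Equiv.Perm.inv_def, Equiv.symm_apply_apply] at h2
  exact le_antisymm h2 h1

end helpers

section lrlemmas
variable {n : ℕ}
lemma le_lrMax (w : Equiv.Perm (Fin n)) {k j : Fin n} (h : k ≤ j) : w k ≤ lrMax w j :=
  Finset.le_sup' _ (Finset.mem_Iic.2 h)
lemma rlMin_le (w : Equiv.Perm (Fin n)) {k j : Fin n} (h : j ≤ k) : rlMin w j ≤ w k :=
  Finset.inf'_le _ (Finset.mem_Ici.2 h)
lemma lrMax_exists (w : Equiv.Perm (Fin n)) (j : Fin n) : ∃ k ≤ j, lrMax w j = w k := by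
  obtain ⟨k, hk, he⟩ := Finset.exists_mem_eq_sup' (⟨j, Finset.mem_Iic.2 le_rfl⟩ :
    (Finset.Iic j).Nonempty) (fun k => w k)
  exact ⟨k, Finset.mem_Iic.1 hk, he⟩
lemma rlMin_exists (w : Equiv.Perm (Fin n)) (j : Fin n) : ∃ k, j ≤ k ∧ rlMin w j = w k := by
  obtain ⟨k, hk, he⟩ := Finset.exists_mem_eq_inf' (⟨j, Finset.mem_Ici.2 le_rfl⟩ :
    (Finset.Ici j).Nonempty) (fun k => w k)
  exact ⟨k, Finset.mem_Ici.1 hk, he⟩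
lemma lrMax_mono (w : Equiv.Perm (Fin n)) {j j' : Fin n} (h : j ≤ j') :
    lrMax w j ≤ lrMax w j' := by
  obtain ⟨k, hk, he⟩ := lrMax_exists w j
  rw [he]; exact le_lrMax w (hk.trans h)
lemma rlMin_mono (w : Equiv.Perm (Fin n)) {j j' : Fin n} (h : j ≤ j') :
    rlMin w j ≤ rlMin w j' := by
  obtain ⟨k, hk, he⟩ := rlMin_exists w j'
  rw [he]; exact rlMin_le w (h.trans hk)
end lrlemmas

section inv
variable {n : ℕ}

def invNum (w : Equiv.Perm (Fin n)) : ℕ :=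
  (Finset.univ.filter fun p : Fin n × Fin n => p.1 < p.2 ∧ w p.2 < w p.1).card

def invSet (w : Equiv.Perm (Fin n)) : Finset (Fin n × Fin n) :=
  Finset.univ.filter fun p : Fin n × Fin n => p.1 < p.2 ∧ w p.2 < w p.1

lemma mem_invSet {w : Equiv.Perm (Fin n)} {p : Fin n × Fin n} :
    p ∈ invSet w ↔ p.1 < p.2 ∧ w p.2 < w p.1 := by
  simp [invSet]

lemma invNum_eq (w : Equiv.Perm (Fin n)) : invNum w = (invSet w).card := rfl

lemma invSet_map {w : Equiv.Perm (Fin n)} {i : Fin (n-1)} {p : Fin n × Fin n}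
    (hp : p ∈ (invSet (w * simpleT i)).erase (fi0 i, fi1 i)) :
    (simpleT i p.1, simpleT i p.2) ∈ (invSet w).erase (fi0 i, fi1 i) := by
  obtain ⟨hne, hmem⟩ := Finset.mem_erase.1 hp
  obtain ⟨hlt, hvlt⟩ := mem_invSet.1 hmem
  refine Finset.mem_erase.2 ⟨?_, mem_invSet.2 ⟨?_, ?_⟩⟩
  · intro h
    rw [Prod.ext_iff] at h
    obtain ⟨h1, h2⟩ := h
    have e1 : p.1 = fi1 i := by
      have := congrArg (simpleT i) h1; rwa [simpleT_invol, simpleT_fi0] at this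
    have e2 : p.2 = fi0 i := by
      have := congrArg (simpleT i) h2; rwa [simpleT_invol, simpleT_fi1] at this
    rw [e1, e2] at hlt
    exact absurd hlt (fi0_lt_fi1 i).asymm
  · refine swap_lt_swap i hlt ?_
    intro ⟨h1, h2⟩
    exact hne (Prod.ext h1 h2)
  · simpa [Equiv.Perm.mul_apply] using hvlt

lemma card_erase_eq (w : Equiv.Perm (Fin n)) (i : Fin (n-1)) :
    ((invSet (w * simpleT i)).erase (fi0 i, fi1 i)).card
      = ((invSet w).erase (fi0 i, fi1 i)).card := by
  apply Finset.card_bij (fun p _ => (simpleT i p.1, simpleT i p.2))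
  · intro p hp; exact invSet_map hp
  · intro p hp q hq h
    rw [Prod.ext_iff] at h
    obtain ⟨h1, h2⟩ := h
    have e1 := congrArg (simpleT i) h1
    have e2 := congrArg (simpleT i) h2
    rw [simpleT_invol, simpleT_invol] at e1 e2
    exact Prod.ext e1 e2
  · intro p hp
    refine ⟨(simpleT i p.1, simpleT i p.2), ?_, by simp [simpleT_invol]⟩
    have : invSet ((w * simpleT i) * simpleT i) = invSet w := by
      rw [mul_assoc, simpleT_mul_self i, mul_one]
    exact invSet_map (w := w * simpleT i) (by rwa [this])

lemma invNum_succ {w : Equiv.Perm (Fin n)} {i : Fin (n-1)}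
    (h : w (fi0 i) < w (fi1 i)) : invNum (w * simpleT i) = invNum w + 1 := by
  have hxA : (fi0 i, fi1 i) ∈ invSet (w * simpleT i) := by
    refine mem_invSet.2 ⟨fi0_lt_fi1 i, ?_⟩
    simpa [Equiv.Perm.mul_apply, simpleT_fi0, simpleT_fi1] using h
  have hxB : (fi0 i, fi1 i) ∉ invSet w := by
    intro hmem
    exact absurd ((mem_invSet.1 hmem).2) h.asymm
  have h1 := Finset.card_erase_add_one hxA
  have h2 : (invSet w).erase (fi0 i, fi1 i) = invSet w := Finset.erase_eq_of_notMem hxB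
  have h3 := card_erase_eq w i
  rw [h2] at h3
  rw [invNum_eq, invNum_eq]
  omega

lemma invNum_pred {w : Equiv.Perm (Fin n)} {i : Fin (n-1)}
    (h : w (fi1 i) < w (fi0 i)) : invNum (w * simpleT i) + 1 = invNum w := by
  have h' : (w * simpleT i) (fi0 i) < (w * simpleT i) (fi1 i) := by
    simpa [Equiv.Perm.mul_apply, simpleT_fi0, simpleT_fi1] using h
  have := invNum_succ h'
  rw [mul_assoc, simpleT_mul_self i, mul_one] at this
  omega

lemma w_fi_ne (w : Equiv.Perm (Fin n)) (i : Fin (n-1)) : w (fi0 i) ≠ w (fi1 i) :=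
  fun h => fi0_ne_fi1 i (w.injective h)

lemma invNum_mul_le (w : Equiv.Perm (Fin n)) (i : Fin (n-1)) :
    invNum (w * simpleT i) ≤ invNum w + 1 := by
  rcases lt_or_gt_of_ne (w_fi_ne w i) with h | h
  · exact (invNum_succ h).le
  · have := invNum_pred h; omega

lemma invNum_le_length : ∀ l : List (Fin (n-1)),
    invNum ((l.map simpleT).prod) ≤ l.length := by
  intro l
  induction l using List.reverseRecOn with
  | nil =>
    simp only [List.map_nil, List.prod_nil, List.length_nil, Nat.le_zero]
    rw [invNum_eq]
    rw [Finset.card_eq_zero, Finset.eq_empty_iff_forall_notMem]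
    intro p hp
    obtain ⟨h1, h2⟩ := mem_invSet.1 hp
    simp only [Equiv.Perm.one_apply] at h2
    exact absurd h1 h2.asymm
  | append_singleton l i ih =>
    rw [List.map_append, List.prod_append]
    simp only [List.map_cons, List.map_nil, List.prod_cons, List.prod_nil, mul_one,
      List.length_append, List.length_singleton]
    exact (invNum_mul_le _ i).trans (by omega)

end inv

section words
variable {n : ℕ}

lemma strictMono_of_no_descent {w : Equiv.Perm (Fin n)}
    (h : ∀ i : Fin (n-1), w (fi0 i) < w (fi1 i)) : StrictMono (w : Fin n → Fin n) := by
  cases n with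
  | zero => intro a; exact absurd a.2 (by omega)
  | succ m =>
    refine Fin.strictMono_iff_lt_succ.2 ?_
    intro i
    have hi : (i : Fin (m + 1 - 1)) = i := rfl
    have := h i
    have e0 : fi0 (n := m+1) i = i.castSucc := rfl
    have e1 : fi1 (n := m+1) i = i.succ := rfl
    rwa [e0, e1] at this

lemma invNum_zero_eq_one {w : Equiv.Perm (Fin n)} (h : invNum w = 0) : w = 1 := by
  apply strictMono_eq_one
  intro a b hab
  rcases lt_or_gt_of_ne (fun he => hab.ne (w.injective he)) with h' | h'
  · exact h'
  · exfalso
    rw [invNum_eq, Finset.card_eq_zero, Finset.eq_empty_iff_forall_notMem] at h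
    exact h (a, b) (mem_invSet.2 ⟨hab, h'⟩)

lemma exists_word (w : Equiv.Perm (Fin n)) :
    ∃ l : List (Fin (n-1)), (l.map simpleT).prod = w ∧ l.length = invNum w := by
  generalize hm : invNum w = m
  induction m generalizing w with
  | zero => exact ⟨[], by simp [invNum_zero_eq_one hm], by simp⟩
  | succ m ih =>
    have hdesc : ∃ i : Fin (n-1), w (fi1 i) < w (fi0 i) := by
      by_contra hno
      push_neg at hno
      have : ∀ i : Fin (n-1), w (fi0 i) < w (fi1 i) := fun i =>
        lt_of_le_of_ne (hno i) (w_fi_ne w i)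
      have := strictMono_eq_one (strictMono_of_no_descent this)
      rw [this] at hm
      have : invNum (1 : Equiv.Perm (Fin n)) = 0 := by
        rw [invNum_eq, Finset.card_eq_zero, Finset.eq_empty_iff_forall_notMem]
        intro p hp
        obtain ⟨h1, h2⟩ := mem_invSet.1 hp
        simp only [Equiv.Perm.one_apply] at h2
        exact absurd h1 h2.asymm
      omega
    obtain ⟨i, hi⟩ := hdesc
    have h1 : invNum (w * simpleT i) = m := by have := invNum_pred hi; omega
    obtain ⟨l, hl1, hl2⟩ := ih (w * simpleT i) h1
    refine ⟨l ++ [i], ?_, by simp [hl2, h1]⟩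
    rw [List.map_append, List.prod_append]
    simp only [List.map_cons, List.map_nil, List.prod_cons, List.prod_nil, mul_one, hl1]
    rw [mul_assoc, simpleT_mul_self i, mul_one]

end words

lemma ne_fi1_of_le_fi0 {n : ℕ} {i : Fin (n-1)} {k : Fin n} (hk : k ≤ fi0 i) : k ≠ fi1 i :=
  fun he => absurd (he ▸ hk) (fi0_lt_fi1 i).not_ge

lemma ne_fi0_of_fi1_le {n : ℕ} {i : Fin (n-1)} {k : Fin n} (hk : fi1 i ≤ k) : k ≠ fi0 i :=
  fun he => absurd (he ▸ hk) (fi0_lt_fi1 i).not_ge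

section psi
variable {n : ℕ}

lemma psiMat_def' (w : Equiv.Perm (Fin n)) (a b : Fin n) :
    psiMat w a b ↔ rlMin w b ≤ a ∧ a ≤ lrMax w b := Iff.rfl

lemma lrMax_one (j : Fin n) : lrMax (1 : Equiv.Perm (Fin n)) j = j := by
  apply le_antisymm
  · obtain ⟨k, hk, he⟩ := lrMax_exists 1 j
    rw [he]; exact hk
  · exact le_lrMax 1 le_rfl

lemma rlMin_one (j : Fin n) : rlMin (1 : Equiv.Perm (Fin n)) j = j := by
  apply le_antisymm
  · exact rlMin_le 1 le_rfl
  · obtain ⟨k, hk, he⟩ := rlMin_exists 1 j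
    rw [he]; exact hk

lemma psi_one : psiMat (1 : Equiv.Perm (Fin n)) = (1 : BRel n) := by
  funext a b
  apply propext
  rw [psiMat_def', rlMin_one, lrMax_one, BRel.one_def]
  constructor
  · rintro ⟨h1, h2⟩; exact le_antisymm h2 h1
  · rintro rfl; exact ⟨le_rfl, le_rfl⟩

lemma mul_simpleT_apply (w : Equiv.Perm (Fin n)) (i : Fin (n-1)) (k : Fin n) :
    (w * simpleT i) k = w (simpleT i k) := rfl

lemma lrMax_invariant (w : Equiv.Perm (Fin n)) (i : Fin (n-1)) {b : Fin n}
    (hb : b ≠ fi0 i) : lrMax (w * simpleT i) b = lrMax w b := by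
  apply le_antisymm
  · obtain ⟨k, hk, he⟩ := lrMax_exists (w * simpleT i) b
    rw [he, mul_simpleT_apply]
    exact le_lrMax w (simpleT_Iic i hb hk)
  · obtain ⟨k, hk, he⟩ := lrMax_exists w b
    rw [he]
    have : w k = (w * simpleT i) (simpleT i k) := by
      rw [mul_simpleT_apply, simpleT_invol]
    rw [this]
    exact le_lrMax _ (simpleT_Iic i hb hk)

lemma rlMin_invariant (w : Equiv.Perm (Fin n)) (i : Fin (n-1)) {b : Fin n}
    (hb : b ≠ fi1 i) : rlMin (w * simpleT i) b = rlMin w b := by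
  apply le_antisymm
  · obtain ⟨k, hk, he⟩ := rlMin_exists w b
    rw [he]
    have : w k = (w * simpleT i) (simpleT i k) := by
      rw [mul_simpleT_apply, simpleT_invol]
    rw [this]
    exact rlMin_le _ (simpleT_Ici i hb hk)
  · obtain ⟨k, hk, he⟩ := rlMin_exists (w * simpleT i) b
    rw [he, mul_simpleT_apply]
    exact rlMin_le w (simpleT_Ici i hb hk)

lemma le_fi0_of_le_fi1 {i : Fin (n-1)} {k : Fin n} (h : k ≤ fi1 i) (h' : k ≠ fi1 i) :
    k ≤ fi0 i := by
  rw [Fin.le_def] at h ⊢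
  rw [ne_eq, Fin.ext_iff] at h'
  simp only [fi0, fi1] at *
  omega

lemma lrMax_special (w : Equiv.Perm (Fin n)) (i : Fin (n-1))
    (h : w (fi0 i) < w (fi1 i)) : lrMax (w * simpleT i) (fi0 i) = lrMax w (fi1 i) := by
  apply le_antisymm
  · obtain ⟨k, hk, he⟩ := lrMax_exists (w * simpleT i) (fi0 i)
    rw [he, mul_simpleT_apply]
    refine le_lrMax w ?_
    rcases eq_or_ne k (fi0 i) with rfl | hne
    · rw [simpleT_fi0]
    · rw [simpleT_ne i hne (ne_fi1_of_le_fi0 hk)]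
      exact hk.trans (fi0_lt_fi1 i).le
  · obtain ⟨k, hk, he⟩ := lrMax_exists w (fi1 i)
    rw [he]
    rcases eq_or_ne k (fi1 i) with rfl | hne1
    · have : w (fi1 i) = (w * simpleT i) (fi0 i) := by
        rw [mul_simpleT_apply, simpleT_fi0]
      rw [this]
      exact le_lrMax _ le_rfl
    · have hk0 : k ≤ fi0 i := le_fi0_of_le_fi1 hk hne1
      rcases eq_or_ne k (fi0 i) with rfl | hne0
      · have : (w * simpleT i) (fi0 i) = w (fi1 i) := by
          rw [mul_simpleT_apply, simpleT_fi0]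
        refine le_trans h.le ?_
        rw [← this]
        exact le_lrMax _ le_rfl
      · have : w k = (w * simpleT i) k := by
          rw [mul_simpleT_apply, simpleT_ne i hne0 hne1]
        rw [this]
        exact le_lrMax _ hk0

lemma fi0_le_of_fi1_le {i : Fin (n-1)} {k : Fin n} (h : fi0 i ≤ k) (h' : k ≠ fi0 i) :
    fi1 i ≤ k := by
  rw [Fin.le_def] at h ⊢
  rw [ne_eq, Fin.ext_iff] at h'
  simp only [fi0, fi1] at *
  omega

lemma rlMin_special (w : Equiv.Perm (Fin n)) (i : Fin (n-1))
    (h : w (fi0 i) < w (fi1 i)) : rlMin (w * simpleT i) (fi1 i) = rlMin w (fi0 i) := by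
  apply le_antisymm
  · obtain ⟨k, hk, he⟩ := rlMin_exists w (fi0 i)
    rw [he]
    rcases eq_or_ne k (fi0 i) with rfl | hne0
    · have : w (fi0 i) = (w * simpleT i) (fi1 i) := by
        rw [mul_simpleT_apply, simpleT_fi1]
      rw [this]
      exact rlMin_le _ le_rfl
    · have hk1 : fi1 i ≤ k := fi0_le_of_fi1_le hk hne0
      rcases eq_or_ne k (fi1 i) with rfl | hne1
      · have : (w * simpleT i) (fi1 i) = w (fi0 i) := by
          rw [mul_simpleT_apply, simpleT_fi1]
        refine le_trans ?_ h.le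
        rw [← this]
        exact rlMin_le _ le_rfl
      · have : w k = (w * simpleT i) k := by
          rw [mul_simpleT_apply, simpleT_ne i hne0 hne1]
        rw [this]
        exact rlMin_le _ hk1
  · obtain ⟨k, hk, he⟩ := rlMin_exists (w * simpleT i) (fi1 i)
    rw [he, mul_simpleT_apply]
    refine rlMin_le w ?_
    rcases eq_or_ne k (fi1 i) with rfl | hne
    · rw [simpleT_fi1]
    · rw [simpleT_ne i (ne_fi0_of_fi1_le hk) hne]
      exact (fi0_lt_fi1 i).le.trans hk

lemma union_interval (w : Equiv.Perm (Fin n)) (i : Fin (n-1))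
    (h : w (fi0 i) < w (fi1 i)) (a : Fin n) :
    (psiMat w a (fi0 i) ∨ psiMat w a (fi1 i)) ↔
      (rlMin w (fi0 i) ≤ a ∧ a ≤ lrMax w (fi1 i)) := by
  constructor
  · rintro (⟨h1, h2⟩ | ⟨h1, h2⟩)
    · exact ⟨h1, h2.trans (lrMax_mono w (fi0_lt_fi1 i).le)⟩
    · exact ⟨(rlMin_mono w (fi0_lt_fi1 i).le).trans h1, h2⟩
  · rintro ⟨h1, h2⟩
    by_cases hc : a ≤ lrMax w (fi0 i)
    · exact Or.inl ⟨h1, hc⟩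
    · push_neg at hc
      refine Or.inr ⟨?_, h2⟩
      by_contra hc2
      push_neg at hc2
      set m := w.symm a with hm
      have hwm : w m = a := w.apply_symm_apply a
      rcases le_or_gt (fi1 i) m with hge | hlt
      · exact absurd (hwm ▸ rlMin_le w hge) hc2.not_ge
      · have : m ≤ fi0 i := by
          rw [Fin.le_def]; rw [Fin.lt_def] at hlt
          simp only [fi0, fi1] at *; omega
        exact absurd (hwm ▸ le_lrMax w this) hc.not_ge

lemma eps_apply (i : Fin (n-1)) (a b : Fin n) : eps i a b ↔ (a = b ∨ a = simpleT i b) :=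
  Iff.rfl

lemma mul_eps_apply (ξ : BRel n) (i : Fin (n-1)) (a b : Fin n) :
    (ξ * eps i) a b ↔ ξ a b ∨ ξ a (simpleT i b) := by
  rw [BRel.mul_def]
  constructor
  · rintro ⟨k, hk, (rfl | rfl)⟩
    · exact Or.inl hk
    · exact Or.inr hk
  · rintro (h | h)
    · exact ⟨b, h, Or.inl rfl⟩
    · exact ⟨simpleT i b, h, Or.inr rfl⟩

lemma prod_step (w : Equiv.Perm (Fin n)) (i : Fin (n-1))
    (h : w (fi0 i) < w (fi1 i)) :
    psiMat w * eps i = psiMat (w * simpleT i) := by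
  funext a b
  apply propext
  rw [mul_eps_apply]
  rcases eq_or_ne b (fi0 i) with rfl | hb0
  · rw [simpleT_fi0]
    rw [psiMat_def' (w * simpleT i), rlMin_invariant w i (fi0_ne_fi1 i),
      lrMax_special w i h]
    exact union_interval w i h a
  · rcases eq_or_ne b (fi1 i) with rfl | hb1
    · rw [simpleT_fi1]
      rw [psiMat_def' (w * simpleT i), rlMin_special w i h,
        lrMax_invariant w i (Ne.symm (fi0_ne_fi1 i))]
      rw [or_comm]
      exact union_interval w i h a
    · rw [simpleT_ne i hb0 hb1]
      rw [psiMat_def' (w * simpleT i), rlMin_invariant w i hb1,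
        lrMax_invariant w i hb0, or_self]
      exact Iff.rfl

end psi

section final
variable {n : ℕ}

lemma rlMin_le_self (w : Equiv.Perm (Fin n)) (j : Fin n) : rlMin w j ≤ j :=
  aux_card_Ici w w.injective (fun k hk => rlMin_le w hk)

lemma self_le_lrMax (w : Equiv.Perm (Fin n)) (j : Fin n) : j ≤ lrMax w j :=
  aux_card_Iic w w.injective (fun k hk => le_lrMax w hk)

lemma maxF_psi (w : Equiv.Perm (Fin n)) : maxF (psiMat w) = lrMax w := by
  classical
  funext j
  apply le_antisymm
  · apply Finset.max'_le
    intro y hy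
    rcases Finset.mem_insert.1 hy with rfl | hy
    · exact self_le_lrMax w y
    · exact (Finset.mem_filter.1 hy).2.2
  · apply Finset.le_max'
    refine Finset.mem_insert.2 (Or.inr (Finset.mem_filter.2 ⟨Finset.mem_univ _, ?_, le_rfl⟩))
    exact (rlMin_le_self w j).trans (self_le_lrMax w j)

lemma minF_psi (w : Equiv.Perm (Fin n)) : minF (psiMat w) = rlMin w := by
  classical
  funext j
  apply le_antisymm
  · apply Finset.min'_le
    refine Finset.mem_insert.2 (Or.inr (Finset.mem_filter.2 ⟨Finset.mem_univ _, le_rfl, ?_⟩))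
    exact (rlMin_le_self w j).trans (self_le_lrMax w j)
  · apply Finset.le_min'
    intro y hy
    rcases Finset.mem_insert.1 hy with rfl | hy
    · exact rlMin_le_self w y
    · exact (Finset.mem_filter.1 hy).2.1

lemma key_lemma : ∀ l : List (Fin (n-1)),
    l.length = invNum ((l.map simpleT).prod) →
    (l.map (eps (n := n))).prod = psiMat ((l.map simpleT).prod) := by
  intro l
  induction l using List.reverseRecOn with
  | nil =>
    intro _
    simp only [List.map_nil, List.prod_nil]
    exact psi_one.symm
  | append_singleton l i ih =>
    intro hlen
    rw [List.map_append, List.prod_append, List.map_append, List.prod_append] at *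
    simp only [List.map_cons, List.map_nil, List.prod_cons, List.prod_nil, mul_one,
      List.length_append, List.length_singleton] at *
    set w' := (l.map simpleT).prod with hw'
    have hB : invNum w' ≤ l.length := invNum_le_length l
    have hlt : w' (fi0 i) < w' (fi1 i) := by
      rcases lt_or_gt_of_ne (w_fi_ne w' i) with h | h
      · exact h
      · have := invNum_pred h
        omega
    have h1 : invNum (w' * simpleT i) = invNum w' + 1 := invNum_succ hlt
    have h2 : l.length = invNum w' := by omega
    rw [ih h2, prod_step w' i hlt]

theorem stmt_6' (w : Equiv.Perm (Fin n)) (l : List (Fin (n - 1)))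
    (hl : IsRedWord w l) :
    (l.map (eps (n := n))).prod = psiMat w ∧
    maxF ((l.map (eps (n := n))).prod) = lrMax w ∧
    minF ((l.map (eps (n := n))).prod) = rlMin w := by
  obtain ⟨hw, hmin⟩ := hl
  have hlen : l.length = invNum w := by
    have h1 : invNum w ≤ l.length := hw ▸ invNum_le_length l
    obtain ⟨l₀, h₀1, h₀2⟩ := exists_word w
    have h2 := hmin l₀ h₀1
    omega
  have hprod : (l.map (eps (n := n))).prod = psiMat w := by
    have := key_lemma l (by rw [hw, ← hlen])
    rwa [hw] at this
  rw [hprod]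
  exact ⟨rfl, maxF_psi w, minF_psi w⟩

end final

/-- For any reduced word `l` of `w`, the Boolean matrix `Ψ(z_w)`
(the product of the `ε_i` along `l`) has `(i,j)` entry `1` iff `β_w(j) ≤ i ≤ α_w(j)`;
in particular `max(Ψ(z_w)) = α_w` and `min(Ψ(z_w)) = β_w`. -/
theorem stmt_6 (n : ℕ) (w : Equiv.Perm (Fin n)) (l : List (Fin (n - 1)))
    (hl : IsRedWord w l) :
    (l.map (eps (n := n))).prod = psiMat w ∧
    maxF ((l.map (eps (n := n))).prod) = lrMax w ∧
    minF ((l.map (eps (n := n))).prod) = rlMin w := by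
  exact stmt_6' w l hl
end

section
/- For every order-preserving non-decreasing transformation α of {1,...,n} there is exactly one 321-avoiding permutation w ∈ S_n whose left-to-right maximum function α_w equals α. -/
open Pointwise

namespace Stmt7Aux

variable {n : ℕ}

/-- `e k < x` iff `k` is less than the number of elements of `s` below `x`. -/
lemma enum_lt_iff (s : Finset (Fin n)) {m : ℕ} (h : s.card = m) (k : Fin m) (x : Fin n) :
    s.orderEmbOfFin h k < x ↔ (k : ℕ) < (s.filter (· < x)).card := by
  classical
  set e := s.orderEmbOfFin h with he
  set S : Finset (Fin m) := Finset.univ.filter (fun i => e i < x) with hS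
  have hcardS : S.card = (s.filter (· < x)).card := by
    apply Finset.card_bij (fun i _ => e i)
    · intro a ha
      simp only [hS, Finset.mem_filter, Finset.mem_univ, true_and] at ha
      exact Finset.mem_filter.2 ⟨s.orderEmbOfFin_mem h a, ha⟩
    · intro a _ b _ hab
      exact (s.orderEmbOfFin h).injective hab
    · intro b hb
      simp only [Finset.mem_filter] at hb
      obtain ⟨i, hi⟩ : ∃ i, e i = b := by
        have := s.range_orderEmbOfFin h
        have : b ∈ Set.range e := by rw [he, this]; exact_mod_cast hb.1
        exact this
      exact ⟨i, by simp [hS, hi, hb.2], hi⟩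
  constructor
  · intro hk
    have hsub : Finset.Iic k ⊆ S := by
      intro i hi
      simp only [Finset.mem_Iic] at hi
      simp only [hS, Finset.mem_filter, Finset.mem_univ, true_and]
      exact lt_of_le_of_lt ((s.orderEmbOfFin h).monotone hi) hk
    have := Finset.card_le_card hsub
    rw [Fin.card_Iic] at this
    omega
  · intro hk
    by_contra hek
    have hsub : S ⊆ Finset.Iio k := by
      intro i hi
      simp only [hS, Finset.mem_filter, Finset.mem_univ, true_and] at hi
      simp only [Finset.mem_Iio]
      by_contra hik
      exact hek (lt_of_le_of_lt ((s.orderEmbOfFin h).monotone (not_lt.1 hik)) hi)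
    have := Finset.card_le_card hsub
    rw [Fin.card_Iio] at this
    omega

/-- The index of an element in the enumeration equals the number of smaller elements. -/
lemma enum_index (s : Finset (Fin n)) {m : ℕ} (h : s.card = m) (k : Fin m) :
    (k : ℕ) = (s.filter (· < s.orderEmbOfFin h k)).card := by
  classical
  have hle : (s.filter (· < s.orderEmbOfFin h k)).card ≤ (k : ℕ) := by
    have := (enum_lt_iff s h k (s.orderEmbOfFin h k)).not.1 (lt_irrefl _)
    omega
  have hge : (k : ℕ) ≤ (s.filter (· < s.orderEmbOfFin h k)).card := by
    have : ((Finset.Iio k).image (s.orderEmbOfFin h)).card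
        ≤ (s.filter (· < s.orderEmbOfFin h k)).card := by
      apply Finset.card_le_card
      intro b hb
      simp only [Finset.mem_image, Finset.mem_Iio] at hb
      obtain ⟨i, hi, rfl⟩ := hb
      exact Finset.mem_filter.2 ⟨s.orderEmbOfFin_mem h i,
        (s.orderEmbOfFin h).strictMono hi⟩
    rwa [Finset.card_image_of_injective _ (s.orderEmbOfFin h).injective, Fin.card_Iio] at this
  omega

variable (α : Fin n → Fin n)

/-- Record positions of `α`. -/
def recP : Finset (Fin n) := Finset.univ.filter fun j => ∀ k, k < j → α k < α j

/-- Record values of `α`. -/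
def recV : Finset (Fin n) := (recP α).image α

lemma mem_recP_iff {j : Fin n} : j ∈ recP α ↔ ∀ k, k < j → α k < α j := by
  simp [recP]

lemma recP_injOn : Set.InjOn α (recP α) := by
  intro p hp q hq hpq
  simp only [Finset.coe_filter, Set.mem_setOf_eq, recP] at hp hq
  rcases lt_trichotomy p q with h | h | h
  · exact absurd hpq (ne_of_lt (hq.2 p h))
  · exact h
  · exact absurd hpq.symm (ne_of_lt (hp.2 q h))

lemma card_recV : (recV α).card = (recP α).card :=
  Finset.card_image_of_injOn (recP_injOn α)

lemma card_compl_eq : ((recP α)ᶜ).card = ((recV α)ᶜ).card := by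
  simp [Finset.card_compl, card_recV]


variable {α}

lemma firstAttain (hmono : Monotone α) (j : Fin n) :
    ∃ p, p ∈ recP α ∧ p ≤ j ∧ α p = α j ∧ (j ∉ recP α → p < j) := by
  classical
  set S : Finset (Fin n) := Finset.univ.filter fun k => α k = α j with hSdef
  have hjS : j ∈ S := by simp [hSdef]
  set p := S.min' ⟨j, hjS⟩ with hp
  have hpS : p ∈ S := S.min'_mem _
  have hpj : α p = α j := by simpa [hSdef] using hpS
  have hple : p ≤ j := S.min'_le j hjS
  have hpP : p ∈ recP α := by
    rw [mem_recP_iff]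
    intro k hk
    refine lt_of_le_of_ne (hmono hk.le) ?_
    intro hkp
    have hkS : k ∈ S := by simp [hSdef, hkp.trans hpj]
    exact absurd (S.min'_le k hkS) (not_le.2 hk)
  exact ⟨p, hpP, hple, hpj, fun hj => lt_of_le_of_ne hple (fun h => hj (h ▸ hpP))⟩

lemma alpha_mem_recV (hmono : Monotone α) (j : Fin n) : α j ∈ recV α := by
  obtain ⟨p, hp, -, hpj, -⟩ := firstAttain hmono j
  exact Finset.mem_image.2 ⟨p, hp, hpj⟩

/-- Key counting: card of records below `j` equals card of record values `≤ α j`,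
for `j` not a record. -/
lemma count_recP_eq (hmono : Monotone α) {j : Fin n} (hj : j ∉ recP α) :
    ((Finset.Iio j).filter (· ∈ recP α)).card = ((recV α).filter (· ≤ α j)).card := by
  classical
  apply Finset.card_bij (fun p _ => α p)
  · intro p hp
    simp only [Finset.mem_filter, Finset.mem_Iio] at hp
    exact Finset.mem_filter.2 ⟨Finset.mem_image.2 ⟨p, hp.2, rfl⟩, hmono hp.1.le⟩
  · intro p hp q hq hpq
    simp only [Finset.mem_filter] at hp hq
    exact recP_injOn α hp.2 hq.2 hpq
  · intro v hv
    simp only [Finset.mem_filter, recV, Finset.mem_image] at hv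
    obtain ⟨⟨p, hpP, rfl⟩, hvle⟩ := hv
    refine ⟨p, ?_, rfl⟩
    simp only [Finset.mem_filter, Finset.mem_Iio]
    refine ⟨?_, hpP⟩
    by_contra hjp
    push_neg at hjp
    have hjp' : j < p := lt_of_le_of_ne hjp (fun h => hj (h ▸ hpP))
    have heq : α p = α j := le_antisymm hvle (hmono hjp'.le)
    obtain ⟨q, hqP, hqle, hqj, -⟩ := firstAttain hmono j
    have : q = p := recP_injOn α hqP hpP (hqj.trans heq.symm)
    omega

lemma count_lt (hmono : Monotone α) (hge : ∀ i, i ≤ α i) {j : Fin n} (hj : j ∉ recP α) :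
    (((recP α)ᶜ).filter (· < j)).card < (((recV α)ᶜ).filter (· < α j)).card := by
  classical
  -- partition of Iio j
  have hP : ((Finset.Iio j).filter (· ∈ recP α)).card
      + (((recP α)ᶜ).filter (· < j)).card = (j : ℕ) := by
    have h1 : ((recP α)ᶜ).filter (· < j) = (Finset.Iio j).filter (fun i => ¬ i ∈ recP α) := by
      ext i
      simp [Finset.mem_filter, Finset.mem_compl, Finset.mem_Iio, and_comm]
    rw [h1, Finset.card_filter_add_card_filter_not, Fin.card_Iio]
  have hV : ((Finset.Iio (α j)).filter (· ∈ recV α)).card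
      + (((recV α)ᶜ).filter (· < α j)).card = ((α j : ℕ)) := by
    have h1 : ((recV α)ᶜ).filter (· < α j)
        = (Finset.Iio (α j)).filter (fun i => ¬ i ∈ recV α) := by
      ext i
      simp [Finset.mem_filter, Finset.mem_compl, Finset.mem_Iio, and_comm]
    rw [h1, Finset.card_filter_add_card_filter_not, Fin.card_Iio]
  -- record values ≤ α j = record values < α j + 1
  have hplus : ((recV α).filter (· ≤ α j)).card
      = ((Finset.Iio (α j)).filter (· ∈ recV α)).card + 1 := by
    have h2 : (Finset.Iio (α j)).filter (· ∈ recV α) = (recV α).filter (· < α j) := by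
      ext i; simp [Finset.mem_filter, Finset.mem_Iio, and_comm]
    rw [h2]
    have h3 : (recV α).filter (· ≤ α j) = insert (α j) ((recV α).filter (· < α j)) := by
      ext v
      simp only [Finset.mem_filter, Finset.mem_insert]
      constructor
      · rintro ⟨hv, hle⟩
        rcases lt_or_eq_of_le hle with h | h
        · exact Or.inr ⟨hv, h⟩
        · exact Or.inl h
      · rintro (rfl | ⟨hv, hlt⟩)
        · exact ⟨alpha_mem_recV hmono j, le_rfl⟩
        · exact ⟨hv, hlt.le⟩
    rw [h3, Finset.card_insert_of_notMem (by simp)]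
  have he := count_recP_eq hmono hj
  have hj' : (j : ℕ) ≤ ((α j : ℕ)) := hge j
  omega

variable (α) in
/-- Index of a non-record position among non-record positions. -/
noncomputable def idx {j : Fin n} (hj : j ∉ recP α) : Fin (((recP α)ᶜ).card) :=
  (((recP α)ᶜ).orderIsoOfFin rfl).symm ⟨j, Finset.mem_compl.2 hj⟩

lemma emb_idx {j : Fin n} (hj : j ∉ recP α) :
    ((recP α)ᶜ).orderEmbOfFin rfl (idx α hj) = j := by
  have := Finset.coe_orderIsoOfFin_apply ((recP α)ᶜ) rfl (idx α hj)
  rw [← this, idx, OrderIso.apply_symm_apply]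

variable (α) in
/-- The 321-avoiding permutation with left-to-right maxima `α`, as a function. -/
noncomputable def gfun : Fin n → Fin n := fun j =>
  if h : j ∈ recP α then α j
  else ((recV α)ᶜ).orderEmbOfFin (card_compl_eq α).symm (idx α h)

lemma gfun_mem (hj : j ∈ recP α) : gfun α j = α j := dif_pos hj

lemma gfun_notMem {j : Fin n} (hj : j ∉ recP α) :
    gfun α j = ((recV α)ᶜ).orderEmbOfFin (card_compl_eq α).symm (idx α hj) := dif_neg hj

lemma gfun_compl_mem {j : Fin n} (hj : j ∉ recP α) : gfun α j ∉ recV α := by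
  rw [gfun_notMem hj]
  have h := Finset.orderEmbOfFin_mem ((recV α)ᶜ) (card_compl_eq α).symm (idx α hj)
  exact Finset.mem_compl.1 h

lemma gfun_lt (hmono : Monotone α) (hge : ∀ i, i ≤ α i) {j : Fin n} (hj : j ∉ recP α) :
    gfun α j < α j := by
  rw [gfun_notMem hj, enum_lt_iff]
  have h1 : ((idx α hj : ℕ)) = (((recP α)ᶜ).filter (· < j)).card := by
    have := enum_index ((recP α)ᶜ) rfl (idx α hj)
    rwa [emb_idx hj] at this
  rw [h1]
  exact count_lt hmono hge hj

lemma gfun_le (hmono : Monotone α) (hge : ∀ i, i ≤ α i) (j : Fin n) :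
    gfun α j ≤ α j := by
  by_cases h : j ∈ recP α
  · rw [gfun_mem h]
  · exact (gfun_lt hmono hge h).le

lemma gfun_strictMonoOn {i j : Fin n} (hi : i ∉ recP α) (hj : j ∉ recP α) (hij : i < j) :
    gfun α i < gfun α j := by
  rw [gfun_notMem hi, gfun_notMem hj]
  apply (((recV α)ᶜ).orderEmbOfFin (card_compl_eq α).symm).strictMono
  rw [idx, idx]
  rw [← OrderIso.lt_iff_lt (((recP α)ᶜ).orderIsoOfFin rfl)]
  rw [OrderIso.apply_symm_apply, OrderIso.apply_symm_apply]
  exact hij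

variable (α) in
lemma gfun_injective : Function.Injective (gfun α) := by
  intro i j hij
  by_cases hi : i ∈ recP α <;> by_cases hj : j ∈ recP α
  · rw [gfun_mem hi, gfun_mem hj] at hij
    exact recP_injOn α hi hj hij
  · have h1 : gfun α i ∈ recV α := by
      rw [gfun_mem hi]; exact Finset.mem_image.2 ⟨i, hi, rfl⟩
    rw [hij] at h1
    exact absurd h1 (gfun_compl_mem hj)
  · have h1 : gfun α j ∈ recV α := by
      rw [gfun_mem hj]; exact Finset.mem_image.2 ⟨j, hj, rfl⟩
    rw [← hij] at h1
    exact absurd h1 (gfun_compl_mem hi)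
  · rw [gfun_notMem hi, gfun_notMem hj] at hij
    have := (((recV α)ᶜ).orderEmbOfFin (card_compl_eq α).symm).injective hij
    have h2 : (((recP α)ᶜ).orderEmbOfFin rfl) (idx α hi)
        = (((recP α)ᶜ).orderEmbOfFin rfl) (idx α hj) := by rw [this]
    rw [emb_idx hi, emb_idx hj] at h2
    exact h2

section Main
variable (hmono : Monotone α) (hge : ∀ i, i ≤ α i)

variable (α) in
noncomputable def wperm : Equiv.Perm (Fin n) :=
  Equiv.ofBijective (gfun α) (Finite.injective_iff_bijective.1 (gfun_injective α))

variable (α) in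
lemma wperm_apply (j : Fin n) : wperm α j = gfun α j := rfl

include hmono hge in
lemma lrMax_wperm : lrMax (wperm α) = α := by
  funext j
  unfold lrMax
  apply le_antisymm
  · apply Finset.sup'_le
    intro k hk
    rw [Finset.mem_Iic] at hk
    exact le_trans (gfun_le hmono hge k) (hmono hk)
  · obtain ⟨p, hpP, hple, hpj, -⟩ := firstAttain hmono j
    have h1 : α j = wperm α p := by rw [wperm_apply, gfun_mem hpP, hpj]
    rw [h1]
    exact Finset.le_sup' (fun k => (wperm α) k) (Finset.mem_Iic.2 hple)

include hmono hge in
lemma avoids_wperm : Avoids321 (wperm α) := by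
  rintro ⟨i, j, k, hij, hjk, h1, h2⟩
  simp only [wperm_apply] at h1 h2
  have hj : j ∉ recP α := by
    intro hj
    have : gfun α j = α j := gfun_mem hj
    have h3 : gfun α i ≤ α j := le_trans (gfun_le hmono hge i) (hmono hij.le)
    rw [this] at h2
    exact absurd h2 (not_lt.2 h3)
  have hk : k ∉ recP α := by
    intro hk
    have : gfun α k = α k := gfun_mem hk
    have h3 : gfun α j ≤ α k := le_trans (gfun_le hmono hge j) (hmono hjk.le)
    rw [this] at h1
    exact absurd h1 (not_lt.2 h3)
  exact absurd (gfun_strictMonoOn hj hk hjk) (not_lt.2 h1.le)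

-- uniqueness lemmas for an arbitrary witness
variable {w : Equiv.Perm (Fin n)} (h321 : Avoids321 w) (hlr : lrMax w = α)

include hlr in
lemma w_le (k : Fin n) : w k ≤ α k := by
  have : w k ≤ lrMax w k := Finset.le_sup' (fun k => w k) (Finset.mem_Iic.2 (le_refl k))
  rwa [hlr] at this

include hlr in
lemma w_attain (j : Fin n) : ∃ k, k ≤ j ∧ w k = α j := by
  obtain ⟨k, hk, hk2⟩ := Finset.exists_mem_eq_sup' (⟨j, Finset.mem_Iic.2 le_rfl⟩ :
    (Finset.Iic j).Nonempty) (fun k => w k)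
  refine ⟨k, Finset.mem_Iic.1 hk, ?_⟩
  have : lrMax w j = w k := hk2
  rw [hlr] at this
  exact this.symm

include hlr in
lemma w_rec {j : Fin n} (hj : j ∈ recP α) : w j = α j := by
  obtain ⟨k, hkj, hk⟩ := w_attain hlr j
  rcases lt_or_eq_of_le hkj with h | h
  · have h1 : α k < α j := (by simpa [recP, Finset.mem_filter] using hj : ∀ k, k < j → α k < α j) k h
    have h2 := w_le hlr k
    rw [hk] at h2
    exact absurd h2 (not_le.2 h1)
  · rwa [h] at hk

include hmono hlr in
lemma w_nonrec_lt {j : Fin n} (hj : j ∉ recP α) : w j < α j := by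
  refine lt_of_le_of_ne (w_le hlr j) ?_
  intro heq
  obtain ⟨p, hpP, -, hpj, hlt⟩ := firstAttain hmono j
  have h1 : w p = α j := by rw [w_rec hlr hpP, hpj]
  have := w.injective (h1.trans heq.symm)
  exact absurd this (ne_of_lt (hlt hj))

include hmono hlr in
lemma w_nonrec_mem {j : Fin n} (hj : j ∉ recP α) : w j ∉ recV α := by
  intro hmem
  obtain ⟨q, hqP, hq⟩ := Finset.mem_image.1 hmem
  have h1 : w q = α q := w_rec hlr hqP
  have := w.injective (h1.trans hq)
  rw [this] at hqP
  exact hj hqP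

include hmono hlr h321 in
lemma w_strictMonoOn {i j : Fin n} (hi : i ∉ recP α) (hj : j ∉ recP α) (hij : i < j) :
    w i < w j := by
  by_contra hle
  have hne : w i ≠ w j := fun h => absurd (w.injective h) (ne_of_lt hij)
  have hji : w j < w i := lt_of_le_of_ne (not_lt.1 hle) (Ne.symm hne)
  obtain ⟨k, hkle, hk⟩ := w_attain hlr i
  have hki : k < i := by
    rcases lt_or_eq_of_le hkle with h | h
    · exact h
    · exfalso
      rw [h] at hk
      exact absurd hk (ne_of_lt (w_nonrec_lt hmono hlr hi))
  have hwi : w i < w k := by rw [hk]; exact w_nonrec_lt hmono hlr hi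
  exact h321 ⟨k, i, j, hki, hij, hji, hwi⟩

include hmono hlr h321 in
lemma w_eq_gfun : ∀ j, w j = gfun α j := by
  intro j
  by_cases hj : j ∈ recP α
  · rw [w_rec hlr hj, gfun_mem hj]
  · set F : Fin (((recP α)ᶜ).card) → Fin n :=
      fun m => w (((recP α)ᶜ).orderEmbOfFin rfl m) with hF
    have hmemF : ∀ m, F m ∈ (recV α)ᶜ := by
      intro m
      have hm := Finset.orderEmbOfFin_mem ((recP α)ᶜ) rfl m
      exact Finset.mem_compl.2 (w_nonrec_mem hmono hlr (Finset.mem_compl.1 hm))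
    have hmonoF : StrictMono F := by
      intro a b hab
      have ha := Finset.mem_compl.1 (Finset.orderEmbOfFin_mem ((recP α)ᶜ) rfl a)
      have hb := Finset.mem_compl.1 (Finset.orderEmbOfFin_mem ((recP α)ᶜ) rfl b)
      exact w_strictMonoOn hmono h321 hlr ha hb
        ((((recP α)ᶜ).orderEmbOfFin rfl).strictMono hab)
    have hFeq : F = ((recV α)ᶜ).orderEmbOfFin (card_compl_eq α).symm :=
      Finset.orderEmbOfFin_unique (card_compl_eq α).symm hmemF hmonoF
    have : w j = F (idx α hj) := by simp only [hF]; rw [emb_idx hj]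
    rw [this, hFeq, gfun_notMem hj]

end Main
end Stmt7Aux

/-- Every order-preserving non-decreasing transformation of `{1,…,n}`
is the left-to-right maximum function of exactly one 321-avoiding permutation. -/
theorem stmt_7 (n : ℕ) (α : Fin n → Fin n) (hmono : Monotone α) (hge : ∀ i, i ≤ α i) :
    ∃! w : Equiv.Perm (Fin n), Avoids321 w ∧ lrMax w = α := by
  refine ⟨Stmt7Aux.wperm α,
    ⟨Stmt7Aux.avoids_wperm hmono hge, Stmt7Aux.lrMax_wperm hmono hge⟩, ?_⟩
  rintro w ⟨h321, hlr⟩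
  apply Equiv.ext
  intro j
  rw [Stmt7Aux.w_eq_gfun hmono h321 hlr j]
  rfl
end
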